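/- arXiv:1510.00086 — 6 statements merged into one kernel-verified Lean document; each statement's English description precedes it below -/
import Mathlib

section
/- In a bipartite market with buyers B, sellers S, edges E, and valuations val : B ∪ S → [0,1], a valid state (P, Π) is stable (i.e., P(B) ≤ P(S) for every edge (B,S), every unmatched agent Z has P(Z) = val(Z), and every matched pair (B,S) ∈ Π has P(B) = P(S)) if and only if the characteristic vector x^Π of the matching Π is an optimal solution to the maximum-weight bipartite matching LP with edge weights w(B,S) = val(B) − val(S), and the utility vector y^P given by y^P(B) = val(B) − P(B), y^P(S) = P(S) − val(S) is an optimal solution to its dual LP. -/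
open Finset

/-- A market: buyers `B`, sellers `S`, trading edges `E`, valuations in `[0,1]`. -/
structure Market (B S : Type*) [Fintype B] [Fintype S] where
  E : Finset (B × S)
  valB : B → ℝ
  valS : S → ℝ
  valB_nonneg : ∀ b, 0 ≤ valB b
  valB_le_one : ∀ b, valB b ≤ 1
  valS_nonneg : ∀ s, 0 ≤ valS s
  valS_le_one : ∀ s, valS s ≤ 1

/-- A state of the market: prices submitted by buyers and sellers, and a matching. -/
structure MState (B S : Type*) where
  PB : B → ℝ
  PS : S → ℝ
  M : Finset (B × S)

variable {B S : Type*} [Fintype B] [Fintype S]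

/-- `Mat` is a matching contained in the edge set. -/
def IsMatching (Mk : Market B S) (Mat : Finset (B × S)) : Prop :=
  Mat ⊆ Mk.E ∧ (∀ p ∈ Mat, ∀ q ∈ Mat, p.1 = q.1 → p = q) ∧
    (∀ p ∈ Mat, ∀ q ∈ Mat, p.2 = q.2 → p = q)

def BMatched (st : MState B S) (b : B) : Prop := ∃ s, (b, s) ∈ st.M
def SMatched (st : MState B S) (s : S) : Prop := ∃ b, (b, s) ∈ st.M

/-- A valid state: bids below valuations, offers above opportunity costs,
and within a matched pair the bid is at least the offer. -/
def ValidState (Mk : Market B S) (st : MState B S) : Prop :=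
  IsMatching Mk st.M ∧ (∀ b, st.PB b ≤ Mk.valB b) ∧ (∀ s, Mk.valS s ≤ st.PS s) ∧
    ∀ p ∈ st.M, st.PS p.2 ≤ st.PB p.1

/-- Social welfare of a matching. -/
def SW (Mk : Market B S) (Mat : Finset (B × S)) : ℝ :=
  ∑ p ∈ Mat, (Mk.valB p.1 - Mk.valS p.2)

/-- Stable state: no bid above an offer on any edge, unmatched agents submit their
valuations, matched pairs have equal prices. -/
def IsStable (Mk : Market B S) (st : MState B S) : Prop :=
  (∀ p ∈ Mk.E, st.PB p.1 ≤ st.PS p.2) ∧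
  (∀ b, ¬ BMatched st b → st.PB b = Mk.valB b) ∧
  (∀ s, ¬ SMatched st s → st.PS s = Mk.valS s) ∧
  ∀ p ∈ st.M, st.PB p.1 = st.PS p.2

/-- ε-stable state. -/
def IsEpsStable (Mk : Market B S) (ε : ℝ) (st : MState B S) : Prop :=
  (∀ p ∈ Mk.E, st.PB p.1 - st.PS p.2 ≤ ε) ∧
  (∀ b, ¬ BMatched st b → st.PB b = Mk.valB b) ∧
  (∀ s, ¬ SMatched st s → st.PS s = Mk.valS s) ∧
  ∀ p ∈ st.M, st.PB p.1 = st.PS p.2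

/-- Weight of an edge: gain from trade. -/
def edgeWeight (Mk : Market B S) (p : B × S) : ℝ := Mk.valB p.1 - Mk.valS p.2

/-- Feasible solution of the primal (fractional matching) LP. -/
def PrimalFeasible (Mk : Market B S) (x : B × S → ℝ) : Prop :=
  (∀ p, 0 ≤ x p) ∧ (∀ p, p ∉ Mk.E → x p = 0) ∧
  (∀ b : B, ∑ s : S, x (b, s) ≤ 1) ∧ (∀ s : S, ∑ b : B, x (b, s) ≤ 1)

def PrimalValue (Mk : Market B S) (x : B × S → ℝ) : ℝ :=
  ∑ p ∈ Mk.E, edgeWeight Mk p * x p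

def PrimalOptimal (Mk : Market B S) (x : B × S → ℝ) : Prop :=
  PrimalFeasible Mk x ∧
  ∀ x' : B × S → ℝ, PrimalFeasible Mk x' → PrimalValue Mk x' ≤ PrimalValue Mk x

/-- Feasible solution of the dual LP. -/
def DualFeasible (Mk : Market B S) (yB : B → ℝ) (yS : S → ℝ) : Prop :=
  (∀ b, 0 ≤ yB b) ∧ (∀ s, 0 ≤ yS s) ∧
  ∀ p ∈ Mk.E, edgeWeight Mk p ≤ yB p.1 + yS p.2

def DualValue (yB : B → ℝ) (yS : S → ℝ) : ℝ := ∑ b : B, yB b + ∑ s : S, yS s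

def DualOptimal (Mk : Market B S) (yB : B → ℝ) (yS : S → ℝ) : Prop :=
  DualFeasible Mk yB yS ∧
  ∀ yB' yS', DualFeasible Mk yB' yS' → DualValue yB yS ≤ DualValue yB' yS'

/-- Characteristic vector of a matching. -/
def charVec [DecidableEq B] [DecidableEq S] (Mat : Finset (B × S)) : B × S → ℝ :=
  fun p => if p ∈ Mat then 1 else 0


section SwapAux
variable {X Y : Type*} [DecidableEq X] [DecidableEq Y]

theorem pd_mem_image_swap {T : Finset (X × Y)} {q : Y × X} :
    q ∈ T.image Prod.swap ↔ q.swap ∈ T := by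
  rw [Finset.mem_image]
  constructor
  · rintro ⟨a, ha, rfl⟩; simpa using ha
  · intro h; exact ⟨q.swap, h, by simp⟩

theorem pd_sum_image_swap (T : Finset (X × Y)) (g : Y × X → ℝ) :
    (∑ p ∈ T.image Prod.swap, g p) = ∑ p ∈ T, g p.swap :=
  Finset.sum_image fun x _ y _ h => Prod.swap_injective h

end SwapAux

section Aux
variable {B S : Type*} [Fintype B] [Fintype S] [DecidableEq B] [DecidableEq S]

/-- Matchings reachable from `M` by alternating swaps along tight edges, together with the
currently exposed buyer. -/
inductive PDExp (E : Finset (B × S)) (w : B × S → ℝ) (M : Finset (B × S))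
    (yB : B → ℝ) (yS : S → ℝ) (b0 : B) : Finset (B × S) → B → Prop
  | base : PDExp E w M yB yS b0 M b0
  | step {M' : Finset (B × S)} {e x : B} {s : S} :
      PDExp E w M yB yS b0 M' e → (e, s) ∈ E → w (e, s) = yB e + yS s →
      (x, s) ∈ M' → PDExp E w M yB yS b0 (insert (e, s) (M'.erase (x, s))) x

variable {E : Finset (B × S)} {w : B × S → ℝ} {M : Finset (B × S)}
  {yB : B → ℝ} {yS : S → ℝ} {b0 : B}

theorem pdexp_inv (hME : M ⊆ E)
    (hM1 : ∀ p ∈ M, ∀ q ∈ M, p.1 = q.1 → p = q)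
    (hM2 : ∀ p ∈ M, ∀ q ∈ M, p.2 = q.2 → p = q)
    (htight : ∀ p ∈ M, w p = yB p.1 + yS p.2)
    (hb0 : ∀ s, (b0, s) ∉ M)
    {M' : Finset (B × S)} {e : B} (h : PDExp E w M yB yS b0 M' e) :
    M' ⊆ E ∧
    (∀ p ∈ M', ∀ q ∈ M', p.1 = q.1 → p = q) ∧
    (∀ p ∈ M', ∀ q ∈ M', p.2 = q.2 → p = q) ∧
    (∀ p ∈ M', w p = yB p.1 + yS p.2) ∧
    (∀ s, (∃ x, (x, s) ∈ M') ↔ (∃ x, (x, s) ∈ M)) ∧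
    (∀ b', (∃ s, (b', s) ∈ M') ↔ ((∃ s, (b', s) ∈ M) ∨ b' = b0) ∧ b' ≠ e) ∧
    ((∑ p ∈ M', w p) = (∑ p ∈ M, w p) + yB b0 - yB e) ∧
    (∀ x s b'', (x, s) ∈ M' → (b'', s) ∈ M → x ≠ b'' →
      ∃ M₂, PDExp E w M yB yS b0 M₂ b'') ∧
    ((∃ s, (e, s) ∈ M) ∨ e = b0) := by
  induction h with
  | base =>
    refine ⟨hME, hM1, hM2, htight, fun s => Iff.rfl, ?_, by ring, ?_, Or.inr rfl⟩
    · intro b'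
      constructor
      · rintro ⟨s, hs⟩
        exact ⟨Or.inl ⟨s, hs⟩, fun hb => hb0 s (hb ▸ hs)⟩
      · rintro ⟨hb, hne⟩
        rcases hb with h | rfl
        · exact h
        · exact absurd rfl hne
    · intro x s b'' hx hb hne
      exact absurd (congrArg Prod.fst (hM2 _ hx _ hb rfl)) hne
  | step h1 hE ht hxs ih =>
    rename_i M' e x s
    obtain ⟨hE', h1', h2', ht', hS', hB', hw', hpart', he'⟩ := ih
    have hem : ¬ ∃ s', (e, s') ∈ M' := fun ⟨s', h⟩ => ((hB' e).1 ⟨s', h⟩).2 rfl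
    have hxe : x ≠ e := fun h => hem ⟨s, h ▸ hxs⟩
    have hnotin : (e, s) ∉ M'.erase (x, s) := fun h => hem ⟨s, Finset.mem_of_mem_erase h⟩
    have hmemnew : ∀ p : B × S, p ∈ insert (e, s) (M'.erase (x, s)) ↔
        p = (e, s) ∨ (p ∈ M' ∧ p ≠ (x, s)) := by
      intro p
      simp [Finset.mem_insert, Finset.mem_erase, and_comm]
    refine ⟨?_, ?_, ?_, ?_, ?_, ?_, ?_, ?_, ((hB' x).1 ⟨s, hxs⟩).1⟩
    · intro p hp
      rcases (hmemnew p).1 hp with rfl | ⟨hp, -⟩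
      · exact hE
      · exact hE' hp
    · intro p hp q hq hpq
      rcases (hmemnew p).1 hp with rfl | ⟨hp, hp'⟩ <;>
        rcases (hmemnew q).1 hq with rfl | ⟨hq, hq'⟩
      · rfl
      · exact absurd ⟨q.2, by rw [show e = q.1 from hpq]; simpa using hq⟩ hem
      · exact absurd ⟨p.2, by rw [show e = p.1 from hpq.symm]; simpa using hp⟩ hem
      · exact h1' p hp q hq hpq
    · intro p hp q hq hpq
      rcases (hmemnew p).1 hp with rfl | ⟨hp, hp'⟩ <;>
        rcases (hmemnew q).1 hq with rfl | ⟨hq, hq'⟩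
      · rfl
      · exact absurd (h2' q hq (x, s) hxs (by simpa using hpq.symm)) hq'
      · exact absurd (h2' p hp (x, s) hxs (by simpa using hpq)) hp'
      · exact h2' p hp q hq hpq
    · intro p hp
      rcases (hmemnew p).1 hp with rfl | ⟨hp, -⟩
      · exact ht
      · exact ht' p hp
    · intro s'
      by_cases hs' : s' = s
      · subst hs'
        simp only [hmemnew]
        constructor
        · intro _; exact (hS' s').1 ⟨x, hxs⟩
        · intro _; exact ⟨e, Or.inl rfl⟩
      · constructor
        · rintro ⟨x', hx'⟩
          rcases (hmemnew (x', s')).1 hx' with h | ⟨h, -⟩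
          · exact absurd (congrArg Prod.snd h) hs'
          · exact (hS' s').1 ⟨x', h⟩
        · rintro hM
          obtain ⟨x', hx'⟩ := (hS' s').2 hM
          refine ⟨x', (hmemnew _).2 (Or.inr ⟨hx', ?_⟩)⟩
          intro h
          exact hs' (congrArg Prod.snd h)
    · intro b'
      by_cases hbe : b' = e
      · subst hbe
        constructor
        · intro _; exact ⟨he', Ne.symm hxe⟩
        · intro _; exact ⟨s, (hmemnew _).2 (Or.inl rfl)⟩
      · by_cases hbx : b' = x
        · subst hbx
          constructor
          · rintro ⟨s', hs'⟩
            rcases (hmemnew (b', s')).1 hs' with h | ⟨h, hne⟩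
            · exact absurd (congrArg Prod.fst h) hbe
            · exact absurd (h1' _ h _ hxs rfl) hne
          · rintro ⟨-, hne⟩; exact absurd rfl hne
        · have : (∃ s', (b', s') ∈ insert (e, s) (M'.erase (x, s))) ↔ ∃ s', (b', s') ∈ M' := by
            constructor
            · rintro ⟨s', hs'⟩
              rcases (hmemnew (b', s')).1 hs' with h | ⟨h, -⟩
              · exact absurd (congrArg Prod.fst h) hbe
              · exact ⟨s', h⟩
            · rintro ⟨s', hs'⟩
              refine ⟨s', (hmemnew _).2 (Or.inr ⟨hs', ?_⟩)⟩
              intro h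
              exact hbx (congrArg Prod.fst h)
          rw [this, hB' b']
          constructor
          · rintro ⟨h, -⟩; exact ⟨h, hbx⟩
          · rintro ⟨h, -⟩; exact ⟨h, hbe⟩
    · rw [Finset.sum_insert hnotin, Finset.sum_erase_eq_sub hxs]
      have h1 := ht' _ hxs
      simp only at h1
      rw [hw', ht, h1]
      ring
    · intro x' s' b'' hx' hb'' hne
      rcases (hmemnew (x', s')).1 hx' with h | ⟨h, -⟩
      · have hs' : s' = s := congrArg Prod.snd h
        subst hs'
        by_cases hxb : x = b''
        · subst hxb
          exact ⟨_, PDExp.step h1 hE ht hxs⟩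
        · exact hpart' x s' b'' hxs hb'' hxb
      · exact hpart' x' s' b'' h hb'' hne

theorem pd_key (hME : M ⊆ E)
    (hM1 : ∀ p ∈ M, ∀ q ∈ M, p.1 = q.1 → p = q)
    (hM2 : ∀ p ∈ M, ∀ q ∈ M, p.2 = q.2 → p = q)
    (hyB : ∀ b, 0 ≤ yB b) (hyS : ∀ s, 0 ≤ yS s)
    (hfeas : ∀ p ∈ E, w p ≤ yB p.1 + yS p.2)
    (htight : ∀ p ∈ M, w p = yB p.1 + yS p.2)
    (hprimal : ∀ M' : Finset (B × S), M' ⊆ E →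
      (∀ p ∈ M', ∀ q ∈ M', p.1 = q.1 → p = q) →
      (∀ p ∈ M', ∀ q ∈ M', p.2 = q.2 → p = q) →
      (∑ p ∈ M', w p) ≤ ∑ p ∈ M, w p)
    (hdual : ∀ (yB' : B → ℝ) (yS' : S → ℝ), (∀ b, 0 ≤ yB' b) → (∀ s, 0 ≤ yS' s) →
      (∀ p ∈ E, w p ≤ yB' p.1 + yS' p.2) →
      (∑ b, yB b) + (∑ s, yS s) ≤ (∑ b, yB' b) + (∑ s, yS' s))
    (hb0 : ∀ s, (b0, s) ∉ M) : yB b0 ≤ 0 := by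
  classical
  by_contra hpos0
  push_neg at hpos0
  have inv := fun {M' e} h => pdexp_inv hME hM1 hM2 htight hb0 (M' := M') (e := e) h
  -- every exposed buyer has positive dual value
  have hexp_pos : ∀ {M' : Finset (B × S)} {e : B}, PDExp E w M yB yS b0 M' e → 0 < yB e := by
    intro M' e h
    obtain ⟨hE', h1', h2', ht', hS', hB', hw', -, -⟩ := inv h
    by_contra hle
    push_neg at hle
    have := hprimal M' hE' h1' h2'
    rw [hw'] at this
    linarith
  -- no tight edge from an exposed buyer to an unmatched seller
  have hnoaug : ∀ {M' : Finset (B × S)} {e : B} {s : S}, PDExp E w M yB yS b0 M' e →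
      (e, s) ∈ E → w (e, s) = yB e + yS s → ∃ x, (x, s) ∈ M := by
    intro M' e s h hEs hts
    by_contra hun
    push_neg at hun
    obtain ⟨hE', h1', h2', ht', hS', hB', hw', -, -⟩ := inv h
    have hsM' : ∀ x, (x, s) ∉ M' := by
      intro x hx
      obtain ⟨x', hx'⟩ := (hS' s).1 ⟨x, hx⟩
      exact hun x' hx'
    have heM' : (e, s) ∉ M' := hsM' e
    have h1'' : ∀ p ∈ insert (e, s) M', ∀ q ∈ insert (e, s) M', p.1 = q.1 → p = q := by
      intro p hp q hq hpq
      have hem : ¬ ∃ s', (e, s') ∈ M' := fun ⟨s', hh⟩ => ((hB' e).1 ⟨s', hh⟩).2 rfl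
      rcases Finset.mem_insert.1 hp with rfl | hp <;> rcases Finset.mem_insert.1 hq with rfl | hq
      · rfl
      · exact absurd ⟨q.2, by rw [show e = q.1 from hpq]; simpa using hq⟩ hem
      · exact absurd ⟨p.2, by rw [show e = p.1 from hpq.symm]; simpa using hp⟩ hem
      · exact h1' p hp q hq hpq
    have h2'' : ∀ p ∈ insert (e, s) M', ∀ q ∈ insert (e, s) M', p.2 = q.2 → p = q := by
      intro p hp q hq hpq
      rcases Finset.mem_insert.1 hp with rfl | hp <;> rcases Finset.mem_insert.1 hq with rfl | hq
      · rfl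
      · exact absurd (by rw [show s = q.2 from hpq]; simpa using hq) (hsM' q.1)
      · exact absurd (by rw [show s = p.2 from hpq.symm]; simpa using hp) (hsM' p.1)
      · exact h2' p hp q hq hpq
    have hsub : insert (e, s) M' ⊆ E := by
      intro p hp
      rcases Finset.mem_insert.1 hp with rfl | hp
      · exact hEs
      · exact hE' hp
    have := hprimal _ hsub h1'' h2''
    rw [Finset.sum_insert heM', hw'] at this
    have := hyS s
    have := hexp_pos h
    linarith
  -- the sets of reachable buyers and sellers
  set TB : Finset B := Finset.univ.filter (fun b => ∃ M', PDExp E w M yB yS b0 M' b) with hTB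
  set TS : Finset S := Finset.univ.filter
    (fun s => ∃ e M', PDExp E w M yB yS b0 M' e ∧ (e, s) ∈ E ∧ w (e, s) = yB e + yS s) with hTS
  have hb0TB : b0 ∈ TB := Finset.mem_filter.2 ⟨Finset.mem_univ _, M, PDExp.base⟩
  have hTBpos : ∀ b ∈ TB, 0 < yB b := by
    intro b hb
    obtain ⟨-, M', h⟩ := Finset.mem_filter.1 hb
    exact hexp_pos h
  -- the M-partner of a reachable seller is reachable
  have hpartner : ∀ s ∈ TS, ∀ b'', (b'', s) ∈ M → b'' ∈ TB := by
    intro s hs b'' hb''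
    obtain ⟨-, e, M', h, hEs, hts⟩ := Finset.mem_filter.1 hs
    obtain ⟨hE', h1', h2', ht', hS', hB', hw', hpart', -⟩ := inv h
    obtain ⟨x, hx⟩ := (hS' s).2 ⟨b'', hb''⟩
    by_cases hxb : x = b''
    · subst hxb
      exact Finset.mem_filter.2 ⟨Finset.mem_univ _, _, PDExp.step h hEs hts hx⟩
    · obtain ⟨M₂, h₂⟩ := hpart' x s b'' hx hb'' hxb
      exact Finset.mem_filter.2 ⟨Finset.mem_univ _, M₂, h₂⟩
  -- counting: |TS| < |TB|
  have hcard : TS.card < TB.card := by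
    have hinj : ∀ s : S, ∃ b, s ∈ TS → b ∈ TB.erase b0 ∧ (b, s) ∈ M := by
      intro s
      by_cases hs : s ∈ TS
      swap
      · exact ⟨b0, fun h => absurd h hs⟩
      refine ?_
      obtain ⟨-, e, M', h, hEs, hts⟩ := Finset.mem_filter.1 hs
      obtain ⟨b'', hb''⟩ := hnoaug h hEs hts
      refine ⟨b'', fun _ => ⟨Finset.mem_erase.2 ⟨?_, hpartner s hs b'' hb''⟩, hb''⟩⟩
      rintro rfl
      exact hb0 s hb''
    choose f hf using hinj
    have : TS.card ≤ (TB.erase b0).card := by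
      apply Finset.card_le_card_of_injOn f (fun s hs => (hf s hs).1)
      intro s1 h1 s2 h2 hfe
      have h12 := hM1 _ (hf s1 h1).2 _ (hf s2 h2).2 (by simpa using hfe)
      exact congrArg Prod.snd h12
    have := Finset.card_erase_lt_of_mem hb0TB
    omega
  -- dual adjustment
  set U : Finset ℝ := TB.image yB ∪
    (E.filter (fun p => p.1 ∈ TB ∧ p.2 ∉ TS)).image (fun p => yB p.1 + yS p.2 - w p) with hU
  have hUne : U.Nonempty := ⟨yB b0, Finset.mem_union_left _ (Finset.mem_image_of_mem _ hb0TB)⟩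
  set δ : ℝ := U.min' hUne with hδ
  have hδpos : 0 < δ := by
    rw [hδ, Finset.lt_min'_iff]
    intro u hu
    rcases Finset.mem_union.1 hu with hu | hu
    · obtain ⟨b, hb, rfl⟩ := Finset.mem_image.1 hu
      exact hTBpos b hb
    · obtain ⟨p, hp, rfl⟩ := Finset.mem_image.1 hu
      obtain ⟨hpE, hp1, hp2⟩ := Finset.mem_filter.1 hp
      rcases lt_or_eq_of_le (hfeas p hpE) with h | h
      · linarith
      · exfalso
        apply hp2
        obtain ⟨-, M', hexp⟩ := Finset.mem_filter.1 hp1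
        exact Finset.mem_filter.2 ⟨Finset.mem_univ _, p.1, M', hexp, by simpa using hpE,
          by simpa using h⟩
  have hδle : ∀ u ∈ U, δ ≤ u := fun u hu => Finset.min'_le _ _ hu
  set yB' : B → ℝ := fun b => yB b - if b ∈ TB then δ else 0 with hyB'
  set yS' : S → ℝ := fun s => yS s + if s ∈ TS then δ else 0 with hyS'
  have hfeas' : ∀ p ∈ E, w p ≤ yB' p.1 + yS' p.2 := by
    intro p hp
    simp only [hyB', hyS']
    by_cases h1 : p.1 ∈ TB
    · by_cases h2 : p.2 ∈ TS
      · simp only [if_pos h1, if_pos h2]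
        have := hfeas p hp
        linarith
      · have : δ ≤ yB p.1 + yS p.2 - w p := by
          apply hδle
          exact Finset.mem_union_right _ (Finset.mem_image_of_mem _
            (Finset.mem_filter.2 ⟨hp, h1, h2⟩))
        simp only [if_pos h1, if_neg h2]
        linarith
    · have := hfeas p hp
      simp only [if_neg h1]
      split <;> linarith
  have hyB'nn : ∀ b, 0 ≤ yB' b := by
    intro b
    simp only [hyB']
    split
    · rename_i h
      have : δ ≤ yB b := hδle _ (Finset.mem_union_left _ (Finset.mem_image_of_mem _ h))
      linarith
    · simpa using hyB b
  have hyS'nn : ∀ s, 0 ≤ yS' s := by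
    intro s
    simp only [hyS']
    split
    · have := hyS s; linarith
    · simpa using hyS s
  have hsum := hdual yB' yS' hyB'nn hyS'nn hfeas'
  have hsB : (∑ b, yB' b) = (∑ b, yB b) - TB.card * δ := by
    simp only [hyB', Finset.sum_sub_distrib]
    congr 1
    rw [Finset.sum_ite_mem, Finset.univ_inter, Finset.sum_const, nsmul_eq_mul]
  have hsS : (∑ s, yS' s) = (∑ s, yS s) + TS.card * δ := by
    simp only [hyS', Finset.sum_add_distrib]
    congr 1
    rw [Finset.sum_ite_mem, Finset.univ_inter, Finset.sum_const, nsmul_eq_mul]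
  rw [hsB, hsS] at hsum
  have hlt : (TS.card : ℝ) < TB.card := by exact_mod_cast hcard
  nlinarith


theorem pd_key_seller (hME : M ⊆ E)
    (hM1 : ∀ p ∈ M, ∀ q ∈ M, p.1 = q.1 → p = q)
    (hM2 : ∀ p ∈ M, ∀ q ∈ M, p.2 = q.2 → p = q)
    (hyB : ∀ b, 0 ≤ yB b) (hyS : ∀ s, 0 ≤ yS s)
    (hfeas : ∀ p ∈ E, w p ≤ yB p.1 + yS p.2)
    (htight : ∀ p ∈ M, w p = yB p.1 + yS p.2)
    (hprimal : ∀ M' : Finset (B × S), M' ⊆ E →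
      (∀ p ∈ M', ∀ q ∈ M', p.1 = q.1 → p = q) →
      (∀ p ∈ M', ∀ q ∈ M', p.2 = q.2 → p = q) →
      (∑ p ∈ M', w p) ≤ ∑ p ∈ M, w p)
    (hdual : ∀ (yB' : B → ℝ) (yS' : S → ℝ), (∀ b, 0 ≤ yB' b) → (∀ s, 0 ≤ yS' s) →
      (∀ p ∈ E, w p ≤ yB' p.1 + yS' p.2) →
      (∑ b, yB b) + (∑ s, yS s) ≤ (∑ b, yB' b) + (∑ s, yS' s))
    (s0 : S) (hs0 : ∀ b, (b, s0) ∉ M) : yS s0 ≤ 0 := by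
  refine pd_key (E := E.image Prod.swap) (w := fun p => w p.swap) (M := M.image Prod.swap)
    (yB := yS) (yS := yB) (b0 := s0) (Finset.image_subset_image hME) ?_ ?_ hyS hyB ?_ ?_ ?_ ?_ ?_
  · intro p hp q hq h
    have := hM2 p.swap (pd_mem_image_swap.1 hp) q.swap (pd_mem_image_swap.1 hq) h
    exact Prod.swap_injective this
  · intro p hp q hq h
    have := hM1 p.swap (pd_mem_image_swap.1 hp) q.swap (pd_mem_image_swap.1 hq) h
    exact Prod.swap_injective this
  · intro p hp
    have := hfeas p.swap (pd_mem_image_swap.1 hp)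
    simpa [add_comm] using this
  · intro p hp
    have := htight p.swap (pd_mem_image_swap.1 hp)
    simpa [add_comm] using this
  · intro N hNE h1 h2
    have e1 : (∑ p ∈ N, w p.swap) = ∑ p ∈ N.image Prod.swap, w p :=
      (pd_sum_image_swap N w).symm
    have e2 : (∑ p ∈ M.image Prod.swap, w p.swap) = ∑ p ∈ M, w p := by
      rw [pd_sum_image_swap]
      simp
    rw [e1, e2]
    refine hprimal (N.image Prod.swap) ?_ ?_ ?_
    · intro p hp
      obtain ⟨a, ha, rfl⟩ := Finset.mem_image.1 hp
      exact pd_mem_image_swap.1 (hNE ha)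
    · intro p hp q hq h
      have := h2 p.swap (pd_mem_image_swap.1 hp) q.swap (pd_mem_image_swap.1 hq) h
      exact Prod.swap_injective this
    · intro p hp q hq h
      have := h1 p.swap (pd_mem_image_swap.1 hp) q.swap (pd_mem_image_swap.1 hq) h
      exact Prod.swap_injective this
  · intro yB' yS' h1 h2 h3
    have := hdual yS' yB' h2 h1 ?_
    · linarith
    · intro p hp
      have := h3 p.swap (pd_mem_image_swap.2 (by simpa using hp))
      simpa [add_comm] using this
  · intro b hb
    rw [pd_mem_image_swap] at hb
    exact hs0 b hb

end Aux

section MarketAux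
variable {B S : Type*} [Fintype B] [Fintype S] [DecidableEq B] [DecidableEq S]

theorem pd_weak (Mk : Market B S) (x : B × S → ℝ) (hx : PrimalFeasible Mk x)
    (yB : B → ℝ) (yS : S → ℝ) (hy : DualFeasible Mk yB yS) :
    PrimalValue Mk x ≤ DualValue yB yS := by
  obtain ⟨hx0, hxE, hxB, hxS⟩ := hx
  obtain ⟨hyB, hyS, hyf⟩ := hy
  calc PrimalValue Mk x ≤ ∑ p ∈ Mk.E, (yB p.1 + yS p.2) * x p := by
        refine Finset.sum_le_sum fun p hp => ?_
        exact mul_le_mul_of_nonneg_right (hyf p hp) (hx0 p)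
    _ = ∑ p : B × S, (yB p.1 + yS p.2) * x p := by
        refine Finset.sum_subset (Finset.subset_univ _) fun p _ hp => ?_
        rw [hxE p hp, mul_zero]
    _ = (∑ b, yB b * ∑ s, x (b, s)) + (∑ s, yS s * ∑ b, x (b, s)) := by
        rw [Fintype.sum_prod_type]
        simp_rw [add_mul, Finset.sum_add_distrib, Finset.mul_sum]
        congr 1
        rw [Finset.sum_comm]
    _ ≤ (∑ b, yB b) + (∑ s, yS s) := by
        refine add_le_add (Finset.sum_le_sum fun b _ => ?_) (Finset.sum_le_sum fun s _ => ?_)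
        · exact mul_le_of_le_one_right (hyB b) (hxB b)
        · exact mul_le_of_le_one_right (hyS s) (hxS s)

theorem charVec_primalFeasible (Mk : Market B S) (N : Finset (B × S)) (hNE : N ⊆ Mk.E)
    (h1 : ∀ p ∈ N, ∀ q ∈ N, p.1 = q.1 → p = q)
    (h2 : ∀ p ∈ N, ∀ q ∈ N, p.2 = q.2 → p = q) :
    PrimalFeasible Mk (charVec N) := by
  refine ⟨fun p => ?_, fun p hp => if_neg fun h => hp (hNE h), fun b => ?_, fun s => ?_⟩
  · unfold charVec; split <;> norm_num
  · have : (∑ s, charVec N (b, s)) = ((Finset.univ.filter fun s => (b, s) ∈ N).card : ℝ) := by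
      simp [charVec, Finset.sum_boole]
    rw [this]
    have hle : (Finset.univ.filter fun s => (b, s) ∈ N).card ≤ 1 := by
      refine Finset.card_le_one.2 fun a ha b' hb' => ?_
      have ha' := (Finset.mem_filter.1 ha).2
      have hb'' := (Finset.mem_filter.1 hb').2
      exact congrArg Prod.snd (h1 _ ha' _ hb'' rfl)
    exact_mod_cast hle
  · have : (∑ b, charVec N (b, s)) = ((Finset.univ.filter fun b => (b, s) ∈ N).card : ℝ) := by
      simp [charVec, Finset.sum_boole]
    rw [this]
    have hle : (Finset.univ.filter fun b => (b, s) ∈ N).card ≤ 1 := by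
      refine Finset.card_le_one.2 fun a ha b' hb' => ?_
      have ha' := (Finset.mem_filter.1 ha).2
      have hb'' := (Finset.mem_filter.1 hb').2
      exact congrArg Prod.fst (h2 _ ha' _ hb'' rfl)
    exact_mod_cast hle

theorem primalValue_charVec (Mk : Market B S) (N : Finset (B × S)) (hNE : N ⊆ Mk.E) :
    PrimalValue Mk (charVec N) = ∑ p ∈ N, edgeWeight Mk p := by
  unfold PrimalValue charVec
  rw [show (∑ p ∈ Mk.E, edgeWeight Mk p * if p ∈ N then (1 : ℝ) else 0)
      = ∑ p ∈ Mk.E, if p ∈ N then edgeWeight Mk p else 0 by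
    refine Finset.sum_congr rfl fun p _ => ?_
    split <;> simp]
  rw [← Finset.sum_filter]
  congr 1
  ext p
  simp only [Finset.mem_filter]
  exact ⟨fun h => h.2, fun h => ⟨hNE h, h⟩⟩

theorem sum_matched_fst (M : Finset (B × S)) (f : B → ℝ)
    (h1 : ∀ p ∈ M, ∀ q ∈ M, p.1 = q.1 → p = q)
    (h0 : ∀ b, (¬ ∃ s, (b, s) ∈ M) → f b = 0) :
    (∑ b : B, f b) = ∑ p ∈ M, f p.1 := by
  rw [show (∑ p ∈ M, f p.1) = ∑ b ∈ M.image Prod.fst, f b from (Finset.sum_image h1).symm]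
  refine (Finset.sum_subset (Finset.subset_univ _) fun b _ hb => ?_).symm
  refine h0 b fun ⟨s, hs⟩ => hb ?_
  exact Finset.mem_image.2 ⟨(b, s), hs, rfl⟩

theorem sum_matched_snd (M : Finset (B × S)) (g : S → ℝ)
    (h2 : ∀ p ∈ M, ∀ q ∈ M, p.2 = q.2 → p = q)
    (h0 : ∀ s, (¬ ∃ b, (b, s) ∈ M) → g s = 0) :
    (∑ s : S, g s) = ∑ p ∈ M, g p.2 := by
  rw [show (∑ p ∈ M, g p.2) = ∑ s ∈ M.image Prod.snd, g s from (Finset.sum_image h2).symm]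
  refine (Finset.sum_subset (Finset.subset_univ _) fun s _ hs => ?_).symm
  refine h0 s fun ⟨b, hb⟩ => hs ?_
  exact Finset.mem_image.2 ⟨(b, s), hb, rfl⟩

end MarketAux

/-- a valid state is stable iff `x^Π` is primal optimal and `y^P`
is dual optimal. -/
theorem stable_iff_primal_dual_optimal [DecidableEq B] [DecidableEq S]
    (Mk : Market B S) (st : MState B S) (hvalid : ValidState Mk st) :
    IsStable Mk st ↔
      PrimalOptimal Mk (charVec st.M) ∧
      DualOptimal Mk (fun b => Mk.valB b - st.PB b) (fun s => st.PS s - Mk.valS s) := by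
  obtain ⟨⟨hME, hM1, hM2⟩, hPBv, hPSv, hPP⟩ := hvalid
  constructor
  · rintro ⟨hs1, hs2, hs3, hs4⟩
    have hdf : DualFeasible Mk (fun b => Mk.valB b - st.PB b)
        (fun s => st.PS s - Mk.valS s) := by
      refine ⟨fun b => sub_nonneg.2 (hPBv b), fun s => sub_nonneg.2 (hPSv s), fun p hp => ?_⟩
      have := hs1 p hp
      unfold edgeWeight
      simp only
      linarith
    have hpf := charVec_primalFeasible Mk st.M hME hM1 hM2
    have heq : PrimalValue Mk (charVec st.M)
        = DualValue (fun b => Mk.valB b - st.PB b) (fun s => st.PS s - Mk.valS s) := by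
      rw [primalValue_charVec Mk st.M hME]
      unfold DualValue
      rw [sum_matched_fst st.M _ hM1 (fun b hb => sub_eq_zero_of_eq (hs2 b hb).symm),
        sum_matched_snd st.M _ hM2 (fun s hs => sub_eq_zero_of_eq (hs3 s hs))]
      rw [← Finset.sum_add_distrib]
      refine Finset.sum_congr rfl fun p hp => ?_
      have := hs4 p hp
      unfold edgeWeight
      linarith
    refine ⟨⟨hpf, fun x' hx' => ?_⟩, ⟨hdf, fun yB' yS' hy' => ?_⟩⟩
    · rw [heq]
      exact pd_weak Mk x' hx' _ _ hdf
    · rw [← heq]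
      exact pd_weak Mk (charVec st.M) hpf yB' yS' hy'
  · rintro ⟨⟨hpf, hpo⟩, hdf, hdo⟩
    obtain ⟨hyB0, hyS0, hyf⟩ := hdf
    have cond1 : ∀ p ∈ Mk.E, st.PB p.1 ≤ st.PS p.2 := by
      intro p hp
      have := hyf p hp
      unfold edgeWeight at this
      simp only at this
      linarith
    have cond4 : ∀ p ∈ st.M, st.PB p.1 = st.PS p.2 :=
      fun p hp => le_antisymm (cond1 p (hME hp)) (hPP p hp)
    have htight : ∀ p ∈ st.M, edgeWeight Mk p
        = (fun b => Mk.valB b - st.PB b) p.1 + (fun s => st.PS s - Mk.valS s) p.2 := by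
      intro p hp
      have := cond4 p hp
      unfold edgeWeight
      simp only
      linarith
    have hprimal : ∀ M' : Finset (B × S), M' ⊆ Mk.E →
        (∀ p ∈ M', ∀ q ∈ M', p.1 = q.1 → p = q) →
        (∀ p ∈ M', ∀ q ∈ M', p.2 = q.2 → p = q) →
        (∑ p ∈ M', edgeWeight Mk p) ≤ ∑ p ∈ st.M, edgeWeight Mk p := by
      intro M' hE' h1 h2
      have := hpo (charVec M') (charVec_primalFeasible Mk M' hE' h1 h2)
      rwa [primalValue_charVec Mk M' hE', primalValue_charVec Mk st.M hME] at this
    have hdual : ∀ (yB' : B → ℝ) (yS' : S → ℝ), (∀ b, 0 ≤ yB' b) → (∀ s, 0 ≤ yS' s) →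
        (∀ p ∈ Mk.E, edgeWeight Mk p ≤ yB' p.1 + yS' p.2) →
        (∑ b, (Mk.valB b - st.PB b)) + (∑ s, (st.PS s - Mk.valS s))
          ≤ (∑ b, yB' b) + (∑ s, yS' s) :=
      fun yB' yS' h1 h2 h3 => hdo yB' yS' ⟨h1, h2, h3⟩
    refine ⟨cond1, ?_, ?_, cond4⟩
    · intro b hb
      have h := pd_key hME hM1 hM2 hyB0 hyS0 hyf htight hprimal hdual
        (fun s' hs' => hb ⟨s', hs'⟩)
      have h2 := hPBv b
      linarith
    · intro s hs
      have h := pd_key_seller hME hM1 hM2 hyB0 hyS0 hyf htight hprimal hdual s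
        (fun b hb => hs ⟨b, hb⟩)
      have h2 := hPSv s
      linarith
end

section
/- Every stable state of a market maximizes social welfare: if (P, Π) is a stable valid state, then for every matching Π' ⊆ E, Σ_{(B,S)∈Π} (val(B) − val(S)) ≥ Σ_{(B,S)∈Π'} (val(B) − val(S)). -/
open Finset

variable {B S : Type*} [Fintype B] [Fintype S]

/-- every stable valid state maximizes social welfare. -/
theorem stable_state_maximizes_social_welfare
    (Mk : Market B S) (st : MState B S)
    (hvalid : ValidState Mk st) (hstable : IsStable Mk st) :
    ∀ Mat' : Finset (B × S), IsMatching Mk Mat' → SW Mk Mat' ≤ SW Mk st.M := by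
  classical
  intro Mat' hMat'
  obtain ⟨hME, hMinj1, hMinj2⟩ := hvalid.1
  obtain ⟨-, hPB, hPS, -⟩ := hvalid
  obtain ⟨hedge, hub, hus, heq⟩ := hstable
  obtain ⟨hE', hinj1', hinj2'⟩ := hMat'
  set uB : B → ℝ := fun b => Mk.valB b - st.PB b with huB
  set uS : S → ℝ := fun s => st.PS s - Mk.valS s with huS
  have hsplit : ∀ (Mat : Finset (B × S)), (∀ p ∈ Mat, ∀ q ∈ Mat, p.1 = q.1 → p = q) →
      (∀ p ∈ Mat, ∀ q ∈ Mat, p.2 = q.2 → p = q) →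
      ∑ p ∈ Mat, (uB p.1 + uS p.2)
        = ∑ b ∈ Mat.image Prod.fst, uB b + ∑ s ∈ Mat.image Prod.snd, uS s := by
    intro Mat h1 h2
    rw [Finset.sum_add_distrib, Finset.sum_image h1, Finset.sum_image h2]
  have hBnn : ∀ b, 0 ≤ uB b := fun b => by have := hPB b; simp [huB]; linarith
  have hSnn : ∀ s, 0 ≤ uS s := fun s => by have := hPS s; simp [huS]; linarith
  have h1 : SW Mk Mat' ≤ ∑ b, uB b + ∑ s, uS s := by
    calc SW Mk Mat' ≤ ∑ p ∈ Mat', (uB p.1 + uS p.2) := by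
          apply Finset.sum_le_sum
          intro p hp
          have := hedge p (hE' hp)
          simp [huB, huS]; linarith
      _ = ∑ b ∈ Mat'.image Prod.fst, uB b + ∑ s ∈ Mat'.image Prod.snd, uS s :=
          hsplit Mat' hinj1' hinj2'
      _ ≤ ∑ b, uB b + ∑ s, uS s :=
          add_le_add
            (Finset.sum_le_sum_of_subset_of_nonneg (Finset.subset_univ _)
              (fun b _ _ => hBnn b))
            (Finset.sum_le_sum_of_subset_of_nonneg (Finset.subset_univ _)
              (fun s _ _ => hSnn s))
  have h2 : SW Mk st.M = ∑ b, uB b + ∑ s, uS s := by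
    calc SW Mk st.M = ∑ p ∈ st.M, (uB p.1 + uS p.2) := by
          apply Finset.sum_congr rfl
          intro p hp
          have := heq p hp
          simp [huB, huS]; linarith
      _ = ∑ b ∈ st.M.image Prod.fst, uB b + ∑ s ∈ st.M.image Prod.snd, uS s :=
          hsplit st.M hMinj1 hMinj2
      _ = ∑ b, uB b + ∑ s, uS s := by
          congr 1
          · refine Finset.sum_subset (Finset.subset_univ _) ?_
            intro b _ hb
            have : ¬ BMatched st b := by
              intro ⟨s, hs⟩
              exact hb (Finset.mem_image.mpr ⟨(b, s), hs, rfl⟩)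
            have := hub b this
            simp [huB, this]
          · refine Finset.sum_subset (Finset.subset_univ _) ?_
            intro s _ hs
            have : ¬ SMatched st s := by
              intro ⟨b, hb⟩
              exact hs (Finset.mem_image.mpr ⟨(b, s), hb, rfl⟩)
            have := hus s this
            simp [huS, this]
  linarith
end

section
/- For any market with n agents and any ε > 0, every ε-stable state realizes an ε-approximate social welfare: if (P, Π) is an ε-stable valid state and Π* maximizes social welfare, then SW(Π) ≥ SW(Π*) − n·ε. -/
open Finset

variable {B S : Type*} [Fintype B] [Fintype S]

/-- an ε-stable state realizes ε-approximate social welfare. -/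
theorem eps_stable_approx_social_welfare
    (Mk : Market B S) (ε : ℝ) (hε : 0 < ε) (st : MState B S)
    (hvalid : ValidState Mk st) (hstable : IsEpsStable Mk ε st)
    (Mstar : Finset (B × S)) (hMstar : IsMatching Mk Mstar)
    (hmax : ∀ Mat' : Finset (B × S), IsMatching Mk Mat' → SW Mk Mat' ≤ SW Mk Mstar) :
    SW Mk Mstar - (Fintype.card B + Fintype.card S : ℝ) * ε ≤ SW Mk st.M := by
  classical
  set u : B → ℝ := fun b => Mk.valB b - st.PB b with hu_def
  set v : S → ℝ := fun s => st.PS s - Mk.valS s with hv_def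
  have hu : ∀ b, 0 ≤ u b := fun b => sub_nonneg.2 (hvalid.2.1 b)
  have hv : ∀ s, 0 ≤ v s := fun s => sub_nonneg.2 (hvalid.2.2.1 s)
  -- sum of utilities equals SW of st.M
  have hMinj1 := hvalid.1.2.1
  have hMinj2 := hvalid.1.2.2
  have hsum_u_M : ∑ b ∈ st.M.image Prod.fst, u b = ∑ p ∈ st.M, u p.1 :=
    Finset.sum_image (fun p hp q hq h => hMinj1 p hp q hq h)
  have hsum_v_M : ∑ s ∈ st.M.image Prod.snd, v s = ∑ p ∈ st.M, v p.2 :=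
    Finset.sum_image (fun p hp q hq h => hMinj2 p hp q hq h)
  have himg_u : ∑ b ∈ st.M.image Prod.fst, u b = ∑ b, u b := by
    apply Finset.sum_subset (Finset.subset_univ _)
    intro b _ hb
    have hnm : ¬ BMatched st b := by
      rintro ⟨s, hs⟩; exact hb (Finset.mem_image.2 ⟨(b, s), hs, rfl⟩)
    simp [hu_def, hstable.2.1 b hnm]
  have himg_v : ∑ s ∈ st.M.image Prod.snd, v s = ∑ s, v s := by
    apply Finset.sum_subset (Finset.subset_univ _)
    intro s _ hs
    have hnm : ¬ SMatched st s := by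
      rintro ⟨b, hb⟩; exact hs (Finset.mem_image.2 ⟨(b, s), hb, rfl⟩)
    simp [hv_def, hstable.2.2.1 s hnm]
  have hSWM : ∑ b, u b + ∑ s, v s = SW Mk st.M := by
    rw [← himg_u, ← himg_v, hsum_u_M, hsum_v_M, ← Finset.sum_add_distrib]
    refine Finset.sum_congr rfl (fun p hp => ?_)
    have := hstable.2.2.2 p hp
    simp only [hu_def, hv_def, SW]
    linarith
  -- bound SW of Mstar
  have hstar : SW Mk Mstar ≤ ∑ p ∈ Mstar, u p.1 + ∑ p ∈ Mstar, v p.2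
      + (Mstar.card : ℝ) * ε := by
    have h1 : SW Mk Mstar ≤ ∑ p ∈ Mstar, (u p.1 + v p.2 + ε) := by
      refine Finset.sum_le_sum (fun p hp => ?_)
      have hedge := hstable.1 p (hMstar.1 hp)
      simp only [hu_def, hv_def]
      linarith
    calc SW Mk Mstar ≤ ∑ p ∈ Mstar, (u p.1 + v p.2 + ε) := h1
      _ = ∑ p ∈ Mstar, u p.1 + ∑ p ∈ Mstar, v p.2 + (Mstar.card : ℝ) * ε := by
          rw [Finset.sum_add_distrib, Finset.sum_add_distrib, Finset.sum_const,
            nsmul_eq_mul]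
  have h2 : ∑ p ∈ Mstar, u p.1 ≤ ∑ b, u b := by
    rw [← Finset.sum_image (fun p hp q hq h => hMstar.2.1 p hp q hq h)]
    exact Finset.sum_le_sum_of_subset_of_nonneg (Finset.subset_univ _)
      (fun b _ _ => hu b)
  have h3 : ∑ p ∈ Mstar, v p.2 ≤ ∑ s, v s := by
    rw [← Finset.sum_image (fun p hp q hq h => hMstar.2.2 p hp q hq h)]
    exact Finset.sum_le_sum_of_subset_of_nonneg (Finset.subset_univ _)
      (fun s _ _ => hv s)
  have hcard : (Mstar.card : ℝ) ≤ (Fintype.card B : ℝ) := by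
    have : Mstar.card = (Mstar.image Prod.fst).card :=
      (Finset.card_image_of_injOn (fun p hp q hq h => hMstar.2.1 p hp q hq h)).symm
    rw [this]
    exact_mod_cast Finset.card_le_card (Finset.subset_univ _)
  have hcard' : (Mstar.card : ℝ) * ε ≤ ((Fintype.card B : ℝ) + Fintype.card S) * ε := by
    have h0 : (0:ℝ) ≤ Fintype.card S := by positivity
    nlinarith
  linarith
end

section
/- Let δ = min{ |val(Z₁) − val(Z₂)| : Z₁, Z₂ agents with val(Z₁) ≠ val(Z₂) }. Then for any ε with 0 ≤ ε < δ/n, every ε-stable state of the market maximizes social welfare. -/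
open Finset

variable {B S : Type*} [Fintype B] [Fintype S]

/-- Valuation of an agent (buyer or seller). -/
def agentVal (Mk : Market B S) : B ⊕ S → ℝ := Sum.elim Mk.valB Mk.valS

/-- δ: the minimum nonzero difference between valuations of two agents. -/
noncomputable def DeltaVal (Mk : Market B S) : ℝ :=
  sInf {d : ℝ | ∃ z₁ z₂ : B ⊕ S, agentVal Mk z₁ ≠ agentVal Mk z₂ ∧
    d = |agentVal Mk z₁ - agentVal Mk z₂|}

section AuxChase

/-- Buyer `b` is covered by the edge set `N`. -/
def BCov (N : Finset (B × S)) (b : B) : Prop := ∃ s, (b, s) ∈ N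

/-- Seller `s` is covered by the edge set `N`. -/
def SCov (N : Finset (B × S)) (s : S) : Prop := ∃ b, (b, s) ∈ N

lemma matching_subset {Mk : Market B S} {N N' : Finset (B × S)}
    (h : IsMatching Mk N) (hsub : N' ⊆ N) : IsMatching Mk N' :=
  ⟨hsub.trans h.1, fun p hp q hq => h.2.1 p (hsub hp) q (hsub hq),
    fun p hp q hq => h.2.2 p (hsub hp) q (hsub hq)⟩

lemma matching_card [DecidableEq B] {Mk : Market B S} {N : Finset (B × S)}
    (hN : IsMatching Mk N) : N.card ≤ Fintype.card B := by
  have h : (N.image Prod.fst).card = N.card :=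
    Finset.card_image_of_injOn (fun x hx y hy h => hN.2.1 x hx y hy h)
  rw [← h, ← Finset.card_univ]
  exact Finset.card_le_univ _

lemma SW_erase [DecidableEq B] [DecidableEq S] (Mk : Market B S) {N : Finset (B × S)}
    {p : B × S} (hp : p ∈ N) :
    SW Mk N = SW Mk (N.erase p) + (Mk.valB p.1 - Mk.valS p.2) := by
  rw [SW, SW]
  exact (Finset.sum_erase_add _ _ hp).symm

lemma not_bcov_erase [DecidableEq B] [DecidableEq S] {Mk : Market B S} {N : Finset (B × S)}
    {p : B × S} (hN : IsMatching Mk N) (hp : p ∈ N) : ¬ BCov (N.erase p) p.1 := by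
  rintro ⟨s', hs'⟩
  have h := hN.2.1 (p.1, s') (Finset.mem_of_mem_erase hs') p hp rfl
  rw [h] at hs'
  exact Finset.notMem_erase _ _ hs'

lemma not_scov_erase [DecidableEq B] [DecidableEq S] {Mk : Market B S} {N : Finset (B × S)}
    {p : B × S} (hN : IsMatching Mk N) (hp : p ∈ N) : ¬ SCov (N.erase p) p.2 := by
  rintro ⟨b', hb'⟩
  have h := hN.2.2 (b', p.2) (Finset.mem_of_mem_erase hb') p hp rfl
  rw [h] at hb'
  exact Finset.notMem_erase _ _ hb'

lemma bcov_erase_of_ne [DecidableEq B] [DecidableEq S] {M : Finset (B × S)} {p : B × S}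
    {b : B} (hne : b ≠ p.1) (h : BCov M b) : BCov (M.erase p) b := by
  obtain ⟨x, hx⟩ := h
  exact ⟨x, Finset.mem_erase.mpr ⟨fun hq => hne (congrArg Prod.fst hq), hx⟩⟩

lemma scov_erase_of_ne [DecidableEq B] [DecidableEq S] {M : Finset (B × S)} {p : B × S}
    {s : S} (hne : s ≠ p.2) (h : SCov M s) : SCov (M.erase p) s := by
  obtain ⟨x, hx⟩ := h
  exact ⟨x, Finset.mem_erase.mpr ⟨fun hq => hne (congrArg Prod.snd hq), hx⟩⟩

lemma SW_eq_images [DecidableEq B] [DecidableEq S] (Mk : Market B S) {N : Finset (B × S)}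
    (hN : IsMatching Mk N) :
    SW Mk N = ∑ b ∈ N.image Prod.fst, Mk.valB b - ∑ s ∈ N.image Prod.snd, Mk.valS s := by
  rw [SW, Finset.sum_sub_distrib,
    Finset.sum_image (fun x hx y hy h => hN.2.1 x hx y hy h),
    Finset.sum_image (fun x hx y hy h => hN.2.2 x hx y hy h)]

lemma deltaVal_gap (Mk : Market B S) :
    ∀ z₁ z₂ : B ⊕ S, agentVal Mk z₁ - agentVal Mk z₂ < DeltaVal Mk →
      agentVal Mk z₁ - agentVal Mk z₂ ≤ 0 := by
  intro z₁ z₂ h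
  by_contra hpos
  push_neg at hpos
  have hne : agentVal Mk z₁ ≠ agentVal Mk z₂ := by
    intro he
    rw [he, sub_self] at hpos
    exact lt_irrefl _ hpos
  have hbdd : BddBelow {d : ℝ | ∃ z₁ z₂ : B ⊕ S, agentVal Mk z₁ ≠ agentVal Mk z₂ ∧
      d = |agentVal Mk z₁ - agentVal Mk z₂|} := by
    refine ⟨0, ?_⟩
    rintro d ⟨x, y, -, rfl⟩
    exact abs_nonneg _
  have hle : DeltaVal Mk ≤ |agentVal Mk z₁ - agentVal Mk z₂| :=
    csInf_le hbdd ⟨z₁, z₂, hne, rfl⟩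
  rw [abs_of_pos hpos] at hle
  linarith

end AuxChase

section KeyChase

theorem chase_key [DecidableEq B] [DecidableEq S] (Mk : Market B S)
    (PB : B → ℝ) (PS : S → ℝ) (ε δ : ℝ)
    (hPBv : ∀ b, PB b ≤ Mk.valB b) (hvPS : ∀ s, Mk.valS s ≤ PS s)
    (hE : ∀ p ∈ Mk.E, PB p.1 - PS p.2 ≤ ε)
    (hε0 : 0 ≤ ε)
    (hnδ : ((Fintype.card B + Fintype.card S : ℕ) : ℝ) * ε < δ)
    (hgap : ∀ z₁ z₂ : B ⊕ S, agentVal Mk z₁ - agentVal Mk z₂ < δ →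
        agentVal Mk z₁ - agentVal Mk z₂ ≤ 0) :
    ∀ k : ℕ, ∀ N M : Finset (B × S), IsMatching Mk N → IsMatching Mk M →
      (∀ p ∈ M, PB p.1 = PS p.2) →
      ((2 * (N.card + M.card) ≤ k →
        (∀ b, BCov N b → ¬ BCov M b → PB b = Mk.valB b) →
        (∀ s, SCov N s → ¬ SCov M s → PS s = Mk.valS s) →
        SW Mk N - SW Mk M ≤ 0)
      ∧ (∀ b₀ : B, ∀ a c : ℝ, 2 * (N.card + M.card) + 1 ≤ k →
        (∀ b, b ≠ b₀ → BCov N b → ¬ BCov M b → PB b = Mk.valB b) →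
        (∀ s, SCov N s → ¬ SCov M s → PS s = Mk.valS s) →
        ¬ BCov M b₀ → a ≤ PB b₀ + c → 0 ≤ c → c + N.card * ε < δ →
        (∃ z₀, a = agentVal Mk z₀) →
        SW Mk N - SW Mk M ≤ Mk.valB b₀ - a)
      ∧ (∀ s₀ : S, ∀ a c : ℝ, 2 * (N.card + M.card) + 1 ≤ k →
        (∀ b, BCov N b → ¬ BCov M b → PB b = Mk.valB b) →
        (∀ s, s ≠ s₀ → SCov N s → ¬ SCov M s → PS s = Mk.valS s) →
        ¬ SCov M s₀ → PS s₀ ≤ a + c → 0 ≤ c → c + N.card * ε < δ →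
        (∃ z₀, a = agentVal Mk z₀) →
        SW Mk N - SW Mk M ≤ a - Mk.valS s₀)) := by
  have hNcard : ∀ {N : Finset (B × S)}, IsMatching Mk N →
      (N.card : ℝ) ≤ ((Fintype.card B + Fintype.card S : ℕ) : ℝ) := by
    intro N hN
    exact_mod_cast (matching_card hN).trans (Nat.le_add_right _ _)
  intro k
  induction k with
  | zero =>
    intro N M hN hM hc1
    refine ⟨?_, ?_, ?_⟩
    · intro hk _ _
      have hN0 : N = ∅ := Finset.card_eq_zero.mp (by omega)
      have hM0 : M = ∅ := Finset.card_eq_zero.mp (by omega)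
      simp [SW, hN0, hM0]
    · intro b₀ a c hk
      exact absurd hk (by omega)
    · intro s₀ a c hk
      exact absurd hk (by omega)
  | succ k IH =>
    intro N M hN hM hc1
    refine ⟨?_, ?_, ?_⟩
    -- ===================== Part F =====================
    · intro hk c2B c2S
      by_cases h1 : ∃ p ∈ N, ¬ BCov M p.1
      · obtain ⟨⟨b, s⟩, hpN, hb⟩ := h1
        have hPBb : PB b = Mk.valB b := c2B b ⟨s, hpN⟩ hb
        have h1N : 1 ≤ N.card := Finset.card_pos.mpr ⟨_, hpN⟩
        have hNc : (N.erase (b, s)).card + 1 = N.card := by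
          rw [Finset.card_erase_of_mem hpN]; omega
        have hN' : IsMatching Mk (N.erase (b, s)) := matching_subset hN (Finset.erase_subset _ _)
        have hEdge : PB b - PS s ≤ ε := hE (b, s) (hN.1 hpN)
        by_cases h2 : SCov M s
        · -- start a buyer-frontier chase
          obtain ⟨b₁, hb₁M⟩ := h2
          have h1M : 1 ≤ M.card := Finset.card_pos.mpr ⟨_, hb₁M⟩
          have hMc : (M.erase (b₁, s)).card + 1 = M.card := by
            rw [Finset.card_erase_of_mem hb₁M]; omega
          have hM' : IsMatching Mk (M.erase (b₁, s)) := matching_subset hM (Finset.erase_subset _ _)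
          have meas : 2 * ((N.erase (b, s)).card + (M.erase (b₁, s)).card) + 1 ≤ k := by
            omega
          have c2B' : ∀ b', b' ≠ b₁ → BCov (N.erase (b, s)) b' →
              ¬ BCov (M.erase (b₁, s)) b' → PB b' = Mk.valB b' := by
            intro b' hbne hcovN hncov
            obtain ⟨x, hx⟩ := hcovN
            refine c2B b' ⟨x, Finset.mem_of_mem_erase hx⟩ ?_
            intro hbM
            exact hncov (bcov_erase_of_ne hbne hbM)
          have c2S' : ∀ s', SCov (N.erase (b, s)) s' →
              ¬ SCov (M.erase (b₁, s)) s' → PS s' = Mk.valS s' := by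
            intro s' hcovN hncov
            obtain ⟨y, hy⟩ := hcovN
            have hss : s' ≠ s := by
              rintro rfl
              exact not_scov_erase hN hpN ⟨y, hy⟩
            refine c2S s' ⟨y, Finset.mem_of_mem_erase hy⟩ ?_
            intro hsM
            exact hncov (scov_erase_of_ne hss hsM)
          have hb₁M' : ¬ BCov (M.erase (b₁, s)) b₁ := not_bcov_erase hM hb₁M
          have ha' : Mk.valB b ≤ PB b₁ + ε := by
            have h : PB b₁ = PS s := hc1 (b₁, s) hb₁M
            linarith
          have hcN' : ε + ((N.erase (b, s)).card : ℝ) * ε < δ := by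
            have hcast : ((N.erase (b, s)).card : ℝ) + 1 = (N.card : ℝ) := by
              exact_mod_cast hNc
            have hle : (N.card : ℝ) * ε ≤ _ := mul_le_mul_of_nonneg_right (hNcard hN) hε0
            have hexp : ε + ((N.erase (b, s)).card : ℝ) * ε = (N.card : ℝ) * ε := by
              rw [← hcast]; ring
            linarith
          have hG := (IH (N.erase (b, s)) (M.erase (b₁, s)) hN' hM'
              (fun p hp => hc1 p (Finset.mem_of_mem_erase hp))).2.1 b₁ (Mk.valB b) ε
              meas c2B' c2S' hb₁M' ha' hε0 hcN' ⟨Sum.inl b, rfl⟩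
          have e1 : SW Mk N = SW Mk (N.erase (b, s)) + (Mk.valB b - Mk.valS s) :=
            SW_erase Mk hpN
          have e2 : SW Mk M = SW Mk (M.erase (b₁, s)) + (Mk.valB b₁ - Mk.valS s) :=
            SW_erase Mk hb₁M
          linarith
        · -- drop a nonpositive-surplus edge
          have hPSs : PS s = Mk.valS s := c2S s ⟨b, hpN⟩ h2
          have hcardB : (1 : ℝ) ≤ ((Fintype.card B + Fintype.card S : ℕ) : ℝ) := by
            have hb0 : 0 < Fintype.card B := Fintype.card_pos_iff.mpr ⟨b⟩
            have h1n : 1 ≤ Fintype.card B + Fintype.card S := by omega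
            exact_mod_cast h1n
          have hdrop : Mk.valB b - Mk.valS s ≤ 0 := by
            have hεn : (1 : ℝ) * ε ≤ ((Fintype.card B + Fintype.card S : ℕ) : ℝ) * ε :=
              mul_le_mul_of_nonneg_right hcardB hε0
            have hlt : agentVal Mk (Sum.inl b) - agentVal Mk (Sum.inr s) < δ := by
              show Mk.valB b - Mk.valS s < δ
              linarith
            exact hgap (Sum.inl b) (Sum.inr s) hlt
          have meas : 2 * ((N.erase (b, s)).card + M.card) ≤ k := by omega
          have c2B' : ∀ b', BCov (N.erase (b, s)) b' → ¬ BCov M b' → PB b' = Mk.valB b' := by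
            intro b' hcov hncov
            obtain ⟨x, hx⟩ := hcov
            exact c2B b' ⟨x, Finset.mem_of_mem_erase hx⟩ hncov
          have c2S' : ∀ s', SCov (N.erase (b, s)) s' → ¬ SCov M s' → PS s' = Mk.valS s' := by
            intro s' hcov hncov
            obtain ⟨y, hy⟩ := hcov
            exact c2S s' ⟨y, Finset.mem_of_mem_erase hy⟩ hncov
          have hF := (IH (N.erase (b, s)) M hN' hM hc1).1 meas c2B' c2S'
          have e1 : SW Mk N = SW Mk (N.erase (b, s)) + (Mk.valB b - Mk.valS s) :=
            SW_erase Mk hpN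
          linarith
      · by_cases h3 : ∃ p ∈ N, ¬ SCov M p.2
        · -- start a seller-frontier chase
          obtain ⟨⟨b, s⟩, hpN, hs⟩ := h3
          have hbM : BCov M b := by
            by_contra hnb
            exact h1 ⟨(b, s), hpN, hnb⟩
          obtain ⟨s₁, hbs₁⟩ := hbM
          have hPSs : PS s = Mk.valS s := c2S s ⟨b, hpN⟩ hs
          have h1N : 1 ≤ N.card := Finset.card_pos.mpr ⟨_, hpN⟩
          have h1M : 1 ≤ M.card := Finset.card_pos.mpr ⟨_, hbs₁⟩
          have hNc : (N.erase (b, s)).card + 1 = N.card := by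
            rw [Finset.card_erase_of_mem hpN]; omega
          have hMc : (M.erase (b, s₁)).card + 1 = M.card := by
            rw [Finset.card_erase_of_mem hbs₁]; omega
          have hN' : IsMatching Mk (N.erase (b, s)) := matching_subset hN (Finset.erase_subset _ _)
          have hM' : IsMatching Mk (M.erase (b, s₁)) := matching_subset hM (Finset.erase_subset _ _)
          have hEdge : PB b - PS s ≤ ε := hE (b, s) (hN.1 hpN)
          have meas : 2 * ((N.erase (b, s)).card + (M.erase (b, s₁)).card) + 1 ≤ k := by
            omega
          have c2B' : ∀ b', BCov (N.erase (b, s)) b' →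
              ¬ BCov (M.erase (b, s₁)) b' → PB b' = Mk.valB b' := by
            intro b' hcovN hncov
            obtain ⟨x, hx⟩ := hcovN
            have hbb : b' ≠ b := by
              rintro rfl
              exact not_bcov_erase hN hpN ⟨x, hx⟩
            refine c2B b' ⟨x, Finset.mem_of_mem_erase hx⟩ ?_
            intro hbM'
            exact hncov (bcov_erase_of_ne hbb hbM')
          have c2S' : ∀ s', s' ≠ s₁ → SCov (N.erase (b, s)) s' →
              ¬ SCov (M.erase (b, s₁)) s' → PS s' = Mk.valS s' := by
            intro s' hne hcovN hncov
            obtain ⟨y, hy⟩ := hcovN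
            refine c2S s' ⟨y, Finset.mem_of_mem_erase hy⟩ ?_
            intro hsM
            exact hncov (scov_erase_of_ne hne hsM)
          have hs₁M' : ¬ SCov (M.erase (b, s₁)) s₁ := not_scov_erase hM hbs₁
          have ha' : PS s₁ ≤ Mk.valS s + ε := by
            have h : PB b = PS s₁ := hc1 (b, s₁) hbs₁
            linarith
          have hcN' : ε + ((N.erase (b, s)).card : ℝ) * ε < δ := by
            have hcast : ((N.erase (b, s)).card : ℝ) + 1 = (N.card : ℝ) := by
              exact_mod_cast hNc
            have hle : (N.card : ℝ) * ε ≤ _ := mul_le_mul_of_nonneg_right (hNcard hN) hε0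
            have hexp : ε + ((N.erase (b, s)).card : ℝ) * ε = (N.card : ℝ) * ε := by
              rw [← hcast]; ring
            linarith
          have hG := (IH (N.erase (b, s)) (M.erase (b, s₁)) hN' hM'
              (fun p hp => hc1 p (Finset.mem_of_mem_erase hp))).2.2 s₁ (Mk.valS s) ε
              meas c2B' c2S' hs₁M' ha' hε0 hcN' ⟨Sum.inr s, rfl⟩
          have e1 : SW Mk N = SW Mk (N.erase (b, s)) + (Mk.valB b - Mk.valS s) :=
            SW_erase Mk hpN
          have e2 : SW Mk M = SW Mk (M.erase (b, s₁)) + (Mk.valB b - Mk.valS s₁) :=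
            SW_erase Mk hbs₁
          linarith
        · by_cases h4 : ∃ p ∈ M, ¬ BCov N p.1 ∧ ¬ SCov N p.2
          · -- remove an M-edge touching no N agent
            obtain ⟨⟨b, s⟩, hpM, hnb, hns⟩ := h4
            have h1M : 1 ≤ M.card := Finset.card_pos.mpr ⟨_, hpM⟩
            have hMc : (M.erase (b, s)).card + 1 = M.card := by
              rw [Finset.card_erase_of_mem hpM]; omega
            have hM' : IsMatching Mk (M.erase (b, s)) := matching_subset hM (Finset.erase_subset _ _)
            have meas : 2 * (N.card + (M.erase (b, s)).card) ≤ k := by omega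
            have c2B' : ∀ b', BCov N b' → ¬ BCov (M.erase (b, s)) b' → PB b' = Mk.valB b' := by
              intro b' hcov hncov
              have hbb : b' ≠ b := by
                rintro rfl
                exact hnb hcov
              exact c2B b' hcov (fun hbM => hncov (bcov_erase_of_ne hbb hbM))
            have c2S' : ∀ s', SCov N s' → ¬ SCov (M.erase (b, s)) s' → PS s' = Mk.valS s' := by
              intro s' hcov hncov
              have hss : s' ≠ s := by
                rintro rfl
                exact hns hcov
              exact c2S s' hcov (fun hsM => hncov (scov_erase_of_ne hss hsM))
            have hF := (IH N (M.erase (b, s)) hN hM'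
              (fun p hp => hc1 p (Finset.mem_of_mem_erase hp))).1 meas c2B' c2S'
            have hsurp : 0 ≤ Mk.valB b - Mk.valS s := by
              have h : PB b = PS s := hc1 (b, s) hpM
              linarith [hPBv b, hvPS s]
            have e2 : SW Mk M = SW Mk (M.erase (b, s)) + (Mk.valB b - Mk.valS s) :=
              SW_erase Mk hpM
            linarith
          · by_cases h5 : ∃ p ∈ M, BCov N p.1 ∧ ¬ SCov N p.2
            · -- M-side path endpoint at a seller: buyer-frontier chase, zero credit
              obtain ⟨⟨b, s⟩, hpM, hbcov, hns⟩ := h5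
              have h1M : 1 ≤ M.card := Finset.card_pos.mpr ⟨_, hpM⟩
              have hMc : (M.erase (b, s)).card + 1 = M.card := by
                rw [Finset.card_erase_of_mem hpM]; omega
              have hM' : IsMatching Mk (M.erase (b, s)) := matching_subset hM (Finset.erase_subset _ _)
              have meas : 2 * (N.card + (M.erase (b, s)).card) + 1 ≤ k := by omega
              have c2B' : ∀ b', b' ≠ b → BCov N b' →
                  ¬ BCov (M.erase (b, s)) b' → PB b' = Mk.valB b' := by
                intro b' hne hcov hncov
                exact c2B b' hcov (fun hbM => hncov (bcov_erase_of_ne hne hbM))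
              have c2S' : ∀ s', SCov N s' → ¬ SCov (M.erase (b, s)) s' → PS s' = Mk.valS s' := by
                intro s' hcov hncov
                have hss : s' ≠ s := by
                  rintro rfl
                  exact hns hcov
                exact c2S s' hcov (fun hsM => hncov (scov_erase_of_ne hss hsM))
              have hbM' : ¬ BCov (M.erase (b, s)) b := not_bcov_erase hM hpM
              have ha' : Mk.valS s ≤ PB b + 0 := by
                have h : PB b = PS s := hc1 (b, s) hpM
                linarith [hvPS s]
              have hcN' : 0 + (N.card : ℝ) * ε < δ := by
                have hle : (N.card : ℝ) * ε ≤ _ := mul_le_mul_of_nonneg_right (hNcard hN) hε0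
                linarith
              have hG := (IH N (M.erase (b, s)) hN hM'
                  (fun p hp => hc1 p (Finset.mem_of_mem_erase hp))).2.1 b (Mk.valS s) 0
                  meas c2B' c2S' hbM' ha' le_rfl hcN' ⟨Sum.inr s, rfl⟩
              have e2 : SW Mk M = SW Mk (M.erase (b, s)) + (Mk.valB b - Mk.valS s) :=
                SW_erase Mk hpM
              linarith
            · by_cases h6 : ∃ p ∈ M, ¬ BCov N p.1 ∧ SCov N p.2
              · -- M-side path endpoint at a buyer: seller-frontier chase, zero credit
                obtain ⟨⟨b, s⟩, hpM, hnb, hscov⟩ := h6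
                have h1M : 1 ≤ M.card := Finset.card_pos.mpr ⟨_, hpM⟩
                have hMc : (M.erase (b, s)).card + 1 = M.card := by
                  rw [Finset.card_erase_of_mem hpM]; omega
                have hM' : IsMatching Mk (M.erase (b, s)) := matching_subset hM (Finset.erase_subset _ _)
                have meas : 2 * (N.card + (M.erase (b, s)).card) + 1 ≤ k := by omega
                have c2B' : ∀ b', BCov N b' →
                    ¬ BCov (M.erase (b, s)) b' → PB b' = Mk.valB b' := by
                  intro b' hcov hncov
                  have hbb : b' ≠ b := by
                    rintro rfl
                    exact hnb hcov
                  exact c2B b' hcov (fun hbM => hncov (bcov_erase_of_ne hbb hbM))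
                have c2S' : ∀ s', s' ≠ s → SCov N s' →
                    ¬ SCov (M.erase (b, s)) s' → PS s' = Mk.valS s' := by
                  intro s' hne hcov hncov
                  exact c2S s' hcov (fun hsM => hncov (scov_erase_of_ne hne hsM))
                have hsM' : ¬ SCov (M.erase (b, s)) s := not_scov_erase hM hpM
                have ha' : PS s ≤ Mk.valB b + 0 := by
                  have h : PB b = PS s := hc1 (b, s) hpM
                  linarith [hPBv b]
                have hcN' : 0 + (N.card : ℝ) * ε < δ := by
                  have hle : (N.card : ℝ) * ε ≤ _ := mul_le_mul_of_nonneg_right (hNcard hN) hε0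
                  linarith
                have hG := (IH N (M.erase (b, s)) hN hM'
                    (fun p hp => hc1 p (Finset.mem_of_mem_erase hp))).2.2 s (Mk.valB b) 0
                    meas c2B' c2S' hsM' ha' le_rfl hcN' ⟨Sum.inl b, rfl⟩
                have e2 : SW Mk M = SW Mk (M.erase (b, s)) + (Mk.valB b - Mk.valS s) :=
                  SW_erase Mk hpM
                linarith
              · -- all cycles: the two matchings cover the same agents
                have hNB : ∀ p ∈ N, BCov M p.1 := by
                  intro p hp
                  by_contra hb
                  exact h1 ⟨p, hp, hb⟩
                have hNS : ∀ p ∈ N, SCov M p.2 := by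
                  intro p hp
                  by_contra hs
                  exact h3 ⟨p, hp, hs⟩
                have hMB : ∀ p ∈ M, BCov N p.1 ∧ SCov N p.2 := by
                  intro p hp
                  by_cases hb : BCov N p.1 <;> by_cases hs : SCov N p.2
                  · exact ⟨hb, hs⟩
                  · exact absurd ⟨p, hp, hb, hs⟩ h5
                  · exact absurd ⟨p, hp, hb, hs⟩ h6
                  · exact absurd ⟨p, hp, hb, hs⟩ h4
                have himgB : N.image Prod.fst = M.image Prod.fst := by
                  ext b
                  simp only [Finset.mem_image]
                  constructor
                  · rintro ⟨p, hp, rfl⟩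
                    obtain ⟨s', hs'⟩ := hNB p hp
                    exact ⟨(p.1, s'), hs', rfl⟩
                  · rintro ⟨p, hp, rfl⟩
                    obtain ⟨s', hs'⟩ := (hMB p hp).1
                    exact ⟨(p.1, s'), hs', rfl⟩
                have himgS : N.image Prod.snd = M.image Prod.snd := by
                  ext s
                  simp only [Finset.mem_image]
                  constructor
                  · rintro ⟨p, hp, rfl⟩
                    obtain ⟨b', hb'⟩ := hNS p hp
                    exact ⟨(b', p.2), hb', rfl⟩
                  · rintro ⟨p, hp, rfl⟩
                    obtain ⟨b', hb'⟩ := (hMB p hp).2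
                    exact ⟨(b', p.2), hb', rfl⟩
                have heq : SW Mk N = SW Mk M := by
                  rw [SW_eq_images Mk hN, SW_eq_images Mk hM, himgB, himgS]
                linarith
    -- ===================== Part G (buyer frontier) =====================
    · intro b₀ a c hk c2B c2S hb₀M ha hc0 hcN hz
      obtain ⟨z₀, hz₀⟩ := hz
      by_cases hcov : BCov N b₀
      · obtain ⟨s', hs'N⟩ := hcov
        have h1N : 1 ≤ N.card := Finset.card_pos.mpr ⟨_, hs'N⟩
        have hNc : (N.erase (b₀, s')).card + 1 = N.card := by
          rw [Finset.card_erase_of_mem hs'N]; omega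
        have hN' : IsMatching Mk (N.erase (b₀, s')) := matching_subset hN (Finset.erase_subset _ _)
        have hEdge : PB b₀ - PS s' ≤ ε := hE (b₀, s') (hN.1 hs'N)
        by_cases h2 : SCov M s'
        · obtain ⟨b₂, hb₂M⟩ := h2
          have h1M : 1 ≤ M.card := Finset.card_pos.mpr ⟨_, hb₂M⟩
          have hMc : (M.erase (b₂, s')).card + 1 = M.card := by
            rw [Finset.card_erase_of_mem hb₂M]; omega
          have hM' : IsMatching Mk (M.erase (b₂, s')) := matching_subset hM (Finset.erase_subset _ _)
          have meas : 2 * ((N.erase (b₀, s')).card + (M.erase (b₂, s')).card) + 1 ≤ k := by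
            omega
          have c2B' : ∀ b', b' ≠ b₂ → BCov (N.erase (b₀, s')) b' →
              ¬ BCov (M.erase (b₂, s')) b' → PB b' = Mk.valB b' := by
            intro b' hne hcovN hncov
            obtain ⟨x, hx⟩ := hcovN
            have hbb₀ : b' ≠ b₀ := by
              rintro rfl
              exact not_bcov_erase hN hs'N ⟨x, hx⟩
            refine c2B b' hbb₀ ⟨x, Finset.mem_of_mem_erase hx⟩ ?_
            intro hbM
            exact hncov (bcov_erase_of_ne hne hbM)
          have c2S' : ∀ s'', SCov (N.erase (b₀, s')) s'' →
              ¬ SCov (M.erase (b₂, s')) s'' → PS s'' = Mk.valS s'' := by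
            intro s'' hcovN hncov
            obtain ⟨y, hy⟩ := hcovN
            have hss : s'' ≠ s' := by
              rintro rfl
              exact not_scov_erase hN hs'N ⟨y, hy⟩
            refine c2S s'' ⟨y, Finset.mem_of_mem_erase hy⟩ ?_
            intro hsM
            exact hncov (scov_erase_of_ne hss hsM)
          have hb₂M' : ¬ BCov (M.erase (b₂, s')) b₂ := not_bcov_erase hM hb₂M
          have ha' : a ≤ PB b₂ + (c + ε) := by
            have h : PB b₂ = PS s' := hc1 (b₂, s') hb₂M
            linarith
          have hcN' : (c + ε) + ((N.erase (b₀, s')).card : ℝ) * ε < δ := by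
            have hcast : ((N.erase (b₀, s')).card : ℝ) + 1 = (N.card : ℝ) := by
              exact_mod_cast hNc
            have hexp : (c + ε) + ((N.erase (b₀, s')).card : ℝ) * ε
                = c + (N.card : ℝ) * ε := by rw [← hcast]; ring
            linarith
          have hG := (IH (N.erase (b₀, s')) (M.erase (b₂, s')) hN' hM'
              (fun p hp => hc1 p (Finset.mem_of_mem_erase hp))).2.1 b₂ a (c + ε)
              meas c2B' c2S' hb₂M' ha' (by linarith) hcN' ⟨z₀, hz₀⟩
          have e1 : SW Mk N = SW Mk (N.erase (b₀, s')) + (Mk.valB b₀ - Mk.valS s') :=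
            SW_erase Mk hs'N
          have e2 : SW Mk M = SW Mk (M.erase (b₂, s')) + (Mk.valB b₂ - Mk.valS s') :=
            SW_erase Mk hb₂M
          linarith
        · -- chase ends at seller s'
          have hPSs' : PS s' = Mk.valS s' := c2S s' ⟨b₀, hs'N⟩ h2
          have meas : 2 * ((N.erase (b₀, s')).card + M.card) ≤ k := by omega
          have c2B' : ∀ b', BCov (N.erase (b₀, s')) b' → ¬ BCov M b' →
              PB b' = Mk.valB b' := by
            intro b' hcovN hncov
            obtain ⟨x, hx⟩ := hcovN
            have hbb₀ : b' ≠ b₀ := by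
              rintro rfl
              exact not_bcov_erase hN hs'N ⟨x, hx⟩
            exact c2B b' hbb₀ ⟨x, Finset.mem_of_mem_erase hx⟩ hncov
          have c2S' : ∀ s'', SCov (N.erase (b₀, s')) s'' → ¬ SCov M s'' →
              PS s'' = Mk.valS s'' := by
            intro s'' hcovN hncov
            obtain ⟨y, hy⟩ := hcovN
            exact c2S s'' ⟨y, Finset.mem_of_mem_erase hy⟩ hncov
          have hF := (IH (N.erase (b₀, s')) M hN' hM hc1).1 meas c2B' c2S'
          have hgap1 : a - Mk.valS s' ≤ 0 := by
            have hlt : agentVal Mk z₀ - agentVal Mk (Sum.inr s') < δ := by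
              show agentVal Mk z₀ - Mk.valS s' < δ
              rw [← hz₀]
              have hNε : ε ≤ (N.card : ℝ) * ε := by
                have h1 : (1 : ℝ) ≤ (N.card : ℝ) := by exact_mod_cast h1N
                have := mul_le_mul_of_nonneg_right h1 hε0
                linarith
              linarith
            have := hgap z₀ (Sum.inr s') hlt
            rw [← hz₀] at this
            exact this
          have e1 : SW Mk N = SW Mk (N.erase (b₀, s')) + (Mk.valB b₀ - Mk.valS s') :=
            SW_erase Mk hs'N
          linarith
      · -- chase ends at buyer b₀
        have c2B' : ∀ b', BCov N b' → ¬ BCov M b' → PB b' = Mk.valB b' := by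
          intro b' hcovN hncov
          rcases eq_or_ne b' b₀ with rfl | hne
          · exact absurd hcovN hcov
          · exact c2B b' hne hcovN hncov
        have hF := (IH N M hN hM hc1).1 (by omega) c2B' c2S
        have hgap1 : a - Mk.valB b₀ ≤ 0 := by
          have hlt : agentVal Mk z₀ - agentVal Mk (Sum.inl b₀) < δ := by
            show agentVal Mk z₀ - Mk.valB b₀ < δ
            rw [← hz₀]
            have hNε : (0 : ℝ) ≤ (N.card : ℝ) * ε := by positivity
            linarith [hPBv b₀]
          have := hgap z₀ (Sum.inl b₀) hlt
          rw [← hz₀] at this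
          exact this
        linarith
    -- ===================== Part G' (seller frontier) =====================
    · intro s₀ a c hk c2B c2S hs₀M ha hc0 hcN hz
      obtain ⟨z₀, hz₀⟩ := hz
      by_cases hcov : SCov N s₀
      · obtain ⟨b', hb'N⟩ := hcov
        have h1N : 1 ≤ N.card := Finset.card_pos.mpr ⟨_, hb'N⟩
        have hNc : (N.erase (b', s₀)).card + 1 = N.card := by
          rw [Finset.card_erase_of_mem hb'N]; omega
        have hN' : IsMatching Mk (N.erase (b', s₀)) := matching_subset hN (Finset.erase_subset _ _)
        have hEdge : PB b' - PS s₀ ≤ ε := hE (b', s₀) (hN.1 hb'N)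
        by_cases h2 : BCov M b'
        · obtain ⟨s₂, hs₂M⟩ := h2
          have h1M : 1 ≤ M.card := Finset.card_pos.mpr ⟨_, hs₂M⟩
          have hMc : (M.erase (b', s₂)).card + 1 = M.card := by
            rw [Finset.card_erase_of_mem hs₂M]; omega
          have hM' : IsMatching Mk (M.erase (b', s₂)) := matching_subset hM (Finset.erase_subset _ _)
          have meas : 2 * ((N.erase (b', s₀)).card + (M.erase (b', s₂)).card) + 1 ≤ k := by
            omega
          have c2B' : ∀ b'', BCov (N.erase (b', s₀)) b'' →
              ¬ BCov (M.erase (b', s₂)) b'' → PB b'' = Mk.valB b'' := by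
            intro b'' hcovN hncov
            obtain ⟨x, hx⟩ := hcovN
            have hbb : b'' ≠ b' := by
              rintro rfl
              exact not_bcov_erase hN hb'N ⟨x, hx⟩
            refine c2B b'' ⟨x, Finset.mem_of_mem_erase hx⟩ ?_
            intro hbM
            exact hncov (bcov_erase_of_ne hbb hbM)
          have c2S' : ∀ s'', s'' ≠ s₂ → SCov (N.erase (b', s₀)) s'' →
              ¬ SCov (M.erase (b', s₂)) s'' → PS s'' = Mk.valS s'' := by
            intro s'' hne hcovN hncov
            obtain ⟨y, hy⟩ := hcovN
            have hss : s'' ≠ s₀ := by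
              rintro rfl
              exact not_scov_erase hN hb'N ⟨y, hy⟩
            refine c2S s'' hss ⟨y, Finset.mem_of_mem_erase hy⟩ ?_
            intro hsM
            exact hncov (scov_erase_of_ne hne hsM)
          have hs₂M' : ¬ SCov (M.erase (b', s₂)) s₂ := not_scov_erase hM hs₂M
          have ha' : PS s₂ ≤ a + (c + ε) := by
            have h : PB b' = PS s₂ := hc1 (b', s₂) hs₂M
            linarith
          have hcN' : (c + ε) + ((N.erase (b', s₀)).card : ℝ) * ε < δ := by
            have hcast : ((N.erase (b', s₀)).card : ℝ) + 1 = (N.card : ℝ) := by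
              exact_mod_cast hNc
            have hexp : (c + ε) + ((N.erase (b', s₀)).card : ℝ) * ε
                = c + (N.card : ℝ) * ε := by rw [← hcast]; ring
            linarith
          have hG := (IH (N.erase (b', s₀)) (M.erase (b', s₂)) hN' hM'
              (fun p hp => hc1 p (Finset.mem_of_mem_erase hp))).2.2 s₂ a (c + ε)
              meas c2B' c2S' hs₂M' ha' (by linarith) hcN' ⟨z₀, hz₀⟩
          have e1 : SW Mk N = SW Mk (N.erase (b', s₀)) + (Mk.valB b' - Mk.valS s₀) :=
            SW_erase Mk hb'N
          have e2 : SW Mk M = SW Mk (M.erase (b', s₂)) + (Mk.valB b' - Mk.valS s₂) :=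
            SW_erase Mk hs₂M
          linarith
        · -- chase ends at buyer b'
          have hPBb' : PB b' = Mk.valB b' := c2B b' ⟨s₀, hb'N⟩ h2
          have meas : 2 * ((N.erase (b', s₀)).card + M.card) ≤ k := by omega
          have c2B' : ∀ b'', BCov (N.erase (b', s₀)) b'' → ¬ BCov M b'' →
              PB b'' = Mk.valB b'' := by
            intro b'' hcovN hncov
            obtain ⟨x, hx⟩ := hcovN
            exact c2B b'' ⟨x, Finset.mem_of_mem_erase hx⟩ hncov
          have c2S' : ∀ s'', SCov (N.erase (b', s₀)) s'' → ¬ SCov M s'' →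
              PS s'' = Mk.valS s'' := by
            intro s'' hcovN hncov
            obtain ⟨y, hy⟩ := hcovN
            have hss : s'' ≠ s₀ := by
              rintro rfl
              exact not_scov_erase hN hb'N ⟨y, hy⟩
            exact c2S s'' hss ⟨y, Finset.mem_of_mem_erase hy⟩ hncov
          have hF := (IH (N.erase (b', s₀)) M hN' hM hc1).1 meas c2B' c2S'
          have hgap1 : Mk.valB b' - a ≤ 0 := by
            have hlt : agentVal Mk (Sum.inl b') - agentVal Mk z₀ < δ := by
              show Mk.valB b' - agentVal Mk z₀ < δ
              rw [← hz₀]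
              have hNε : ε ≤ (N.card : ℝ) * ε := by
                have h1 : (1 : ℝ) ≤ (N.card : ℝ) := by exact_mod_cast h1N
                have := mul_le_mul_of_nonneg_right h1 hε0
                linarith
              linarith
            have := hgap (Sum.inl b') z₀ hlt
            rw [← hz₀] at this
            exact this
          have e1 : SW Mk N = SW Mk (N.erase (b', s₀)) + (Mk.valB b' - Mk.valS s₀) :=
            SW_erase Mk hb'N
          linarith
      · -- chase ends at seller s₀
        have c2S' : ∀ s'', SCov N s'' → ¬ SCov M s'' → PS s'' = Mk.valS s'' := by
          intro s'' hcovN hncov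
          rcases eq_or_ne s'' s₀ with rfl | hne
          · exact absurd hcovN hcov
          · exact c2S s'' hne hcovN hncov
        have hF := (IH N M hN hM hc1).1 (by omega) c2B c2S'
        have hgap1 : Mk.valS s₀ - a ≤ 0 := by
          have hlt : agentVal Mk (Sum.inr s₀) - agentVal Mk z₀ < δ := by
            show Mk.valS s₀ - agentVal Mk z₀ < δ
            rw [← hz₀]
            have hNε : (0 : ℝ) ≤ (N.card : ℝ) * ε := by positivity
            linarith [hvPS s₀]
          have := hgap (Sum.inr s₀) z₀ hlt
          rw [← hz₀] at this
          exact this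
        linarith

end KeyChase

/-- for `0 ≤ ε < δ/n`, every ε-stable state maximizes social welfare. -/
theorem eps_stable_maximizes_social_welfare
    (Mk : Market B S)
    (hex : ∃ z₁ z₂ : B ⊕ S, agentVal Mk z₁ ≠ agentVal Mk z₂)
    (ε : ℝ) (hε0 : 0 ≤ ε)
    (hεδ : ε < DeltaVal Mk / (Fintype.card B + Fintype.card S : ℝ))
    (st : MState B S) (hvalid : ValidState Mk st) (hstable : IsEpsStable Mk ε st) :
    ∀ Mat' : Finset (B × S), IsMatching Mk Mat' → SW Mk Mat' ≤ SW Mk st.M := by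
  intro Mat' hMat'
  classical
  have hn : 0 < Fintype.card B + Fintype.card S := by
    obtain ⟨z₁, z₂, h⟩ := hex
    have hpos : 0 < Fintype.card (B ⊕ S) := Fintype.card_pos_iff.mpr ⟨z₁⟩
    rwa [Fintype.card_sum] at hpos
  have hn2 : (0 : ℝ) < (Fintype.card B : ℝ) + (Fintype.card S : ℝ) := by exact_mod_cast hn
  have hmul : ε * ((Fintype.card B : ℝ) + (Fintype.card S : ℝ)) < DeltaVal Mk :=
    (lt_div_iff₀ hn2).mp hεδ
  have hnδ : ((Fintype.card B + Fintype.card S : ℕ) : ℝ) * ε < DeltaVal Mk := by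
    push_cast
    linarith
  have hkey := (chase_key Mk st.PB st.PS ε (DeltaVal Mk) hvalid.2.1 hvalid.2.2.1
      hstable.1 hε0 hnδ (deltaVal_gap Mk) (2 * (Mat'.card + st.M.card))
      Mat' st.M hMat' hvalid.1 hstable.2.2.2).1 le_rfl
      (fun b _ hncov => hstable.2.1 b hncov)
      (fun s _ hncov => hstable.2.2.1 s hncov)
  linarith
end

section
/- If (x, y) is a pair of optimal primal and dual solutions to the bipartite matching LP with weights w(B,S) = val(B) − val(S), where x = x^Π is the characteristic vector of a matching Π and y = y^P arises from a valid price function P, then the state (P, Π) is stable; in particular Σ_{(B,S)∈Π} (P(S) − P(B)) + Σ_{Z ∉ Π} y^P(Z) = 0, which forces P(B) = P(S) on every matched pair and P(Z) = val(Z) for every unmatched agent. -/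
open Finset

variable {B S : Type*} [Fintype B] [Fintype S]

section Helpers

open scoped Classical

variable [DecidableEq B] [DecidableEq S]

lemma charVec_feasible (Mk : Market B S) (M : Finset (B × S))
    (hM : IsMatching Mk M) : PrimalFeasible Mk (charVec M) := by
  refine ⟨fun p => ?_, fun p hp => ?_, fun b => ?_, fun s => ?_⟩
  · unfold charVec; split <;> norm_num
  · unfold charVec; rw [if_neg (fun h => hp (hM.1 h))]
  · have hsum : ∑ s : S, charVec M (b, s) =
        ((univ.filter (fun s => (b, s) ∈ M)).card : ℝ) := by
      simp only [charVec]; rw [Finset.sum_boole]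
    rw [hsum]
    have hle : (univ.filter (fun s => (b, s) ∈ M)).card ≤ 1 := by
      apply Finset.card_le_one.2
      intro s hs s' hs'
      have h1 : (b, s) ∈ M := (Finset.mem_filter.1 hs).2
      have h2 : (b, s') ∈ M := (Finset.mem_filter.1 hs').2
      have := hM.2.1 (b, s) h1 (b, s') h2 rfl
      exact (Prod.ext_iff.1 this).2
    exact_mod_cast hle
  · have hsum : ∑ b : B, charVec M (b, s) =
        ((univ.filter (fun b => (b, s) ∈ M)).card : ℝ) := by
      simp only [charVec]; rw [Finset.sum_boole]
    rw [hsum]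
    have hle : (univ.filter (fun b => (b, s) ∈ M)).card ≤ 1 := by
      apply Finset.card_le_one.2
      intro b hb b' hb'
      have h1 : (b, s) ∈ M := (Finset.mem_filter.1 hb).2
      have h2 : (b', s) ∈ M := (Finset.mem_filter.1 hb').2
      have := hM.2.2 (b, s) h1 (b', s) h2 rfl
      exact (Prod.ext_iff.1 this).1
    exact_mod_cast hle

lemma charVec_value (Mk : Market B S) (M : Finset (B × S)) (hME : M ⊆ Mk.E) :
    PrimalValue Mk (charVec M) = SW Mk M := by
  unfold PrimalValue SW charVec edgeWeight
  rw [Finset.sum_congr rfl (fun p _ => by rw [mul_ite, mul_one, mul_zero]),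
    Finset.sum_ite_mem]
  congr 1
  exact Finset.inter_eq_right.2 hME

/-- Hall condition for buyers with positive dual in the tight subgraph. -/
lemma hall_cond_buyers (Mk : Market B S) (yB : B → ℝ) (yS : S → ℝ)
    (hd : DualOptimal Mk yB yS) (A : Finset B) (hA : ∀ b ∈ A, 0 < yB b) :
    A.card ≤ (A.biUnion (fun b => univ.filter (fun s =>
      (b, s) ∈ Mk.E ∧ edgeWeight Mk (b, s) = yB b + yS s))).card := by
  by_contra hcon
  push_neg at hcon
  set nbr : B → Finset S := fun b => univ.filter (fun s =>
      (b, s) ∈ Mk.E ∧ edgeWeight Mk (b, s) = yB b + yS s) with hnbr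
  set N := A.biUnion nbr with hNdef
  set slackS := Mk.E.filter (fun p => p.1 ∈ A ∧ edgeWeight Mk p ≠ yB p.1 + yS p.2)
    with hslackS
  set vals := insert (1:ℝ) ((A.image yB) ∪
      slackS.image (fun p => yB p.1 + yS p.2 - edgeWeight Mk p)) with hvals
  have hvne : vals.Nonempty := Finset.insert_nonempty _ _
  set δ := vals.min' hvne with hδdef
  have hδle : ∀ x ∈ vals, δ ≤ x := fun x hx => Finset.min'_le _ _ hx
  have hδpos : 0 < δ := by
    rw [hδdef, Finset.lt_min'_iff]
    intro x hx
    rcases Finset.mem_insert.1 hx with rfl | hx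
    · norm_num
    rcases Finset.mem_union.1 hx with hx | hx
    · obtain ⟨b, hb, rfl⟩ := Finset.mem_image.1 hx
      exact hA b hb
    · obtain ⟨p, hp, rfl⟩ := Finset.mem_image.1 hx
      obtain ⟨hpE, -, hne⟩ := Finset.mem_filter.1 hp
      have hle := hd.1.2.2 p hpE
      have : edgeWeight Mk p < yB p.1 + yS p.2 := lt_of_le_of_ne hle hne
      linarith
  set yB' := fun b => if b ∈ A then yB b - δ else yB b with hyB'
  set yS' := fun s => if s ∈ N then yS s + δ else yS s with hyS'
  have hfeas : DualFeasible Mk yB' yS' := by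
    refine ⟨fun b => ?_, fun s => ?_, fun p hp => ?_⟩
    · by_cases hb : b ∈ A
      · have : δ ≤ yB b := hδle _ (Finset.mem_insert_of_mem
          (Finset.mem_union_left _ (Finset.mem_image_of_mem _ hb)))
        simp only [hyB', if_pos hb]; linarith
      · simp only [hyB', if_neg hb]; exact hd.1.1 b
    · by_cases hs : s ∈ N
      · simp only [hyS', if_pos hs]; have := hd.1.2.1 s; linarith
      · simp only [hyS', if_neg hs]; exact hd.1.2.1 s
    · have hyS'ge : yS p.2 ≤ yS' p.2 := by
        by_cases hs : p.2 ∈ N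
        · simp only [hyS', if_pos hs]; linarith
        · simp only [hyS', if_neg hs]; exact le_refl _
      by_cases h1 : p.1 ∈ A
      · by_cases h2 : edgeWeight Mk p = yB p.1 + yS p.2
        · have hpn : p.2 ∈ N := by
            rw [hNdef]
            exact Finset.mem_biUnion.2 ⟨p.1, h1,
              Finset.mem_filter.2 ⟨Finset.mem_univ _, hp, h2⟩⟩
          simp only [hyB', hyS', if_pos h1, if_pos hpn]
          linarith [le_of_eq h2]
        · have hps : p ∈ slackS := Finset.mem_filter.2 ⟨hp, h1, h2⟩
          have hδs : δ ≤ yB p.1 + yS p.2 - edgeWeight Mk p :=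
            hδle _ (Finset.mem_insert_of_mem (Finset.mem_union_right _
              (Finset.mem_image_of_mem _ hps)))
          simp only [hyB', if_pos h1]
          linarith
      · simp only [hyB', if_neg h1]
        have := hd.1.2.2 p hp
        linarith
  have e1 : ∑ b : B, yB' b = (∑ b : B, yB b) - A.card * δ := by
    have hpt : ∀ b : B, yB' b = yB b - (if b ∈ A then δ else 0) := by
      intro b; by_cases hb : b ∈ A <;> simp [hyB', hb]
    rw [Finset.sum_congr rfl (fun b _ => hpt b), Finset.sum_sub_distrib,
      Finset.sum_ite_mem, Finset.univ_inter, Finset.sum_const, nsmul_eq_mul]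
  have e2 : ∑ s : S, yS' s = (∑ s : S, yS s) + N.card * δ := by
    have hpt : ∀ s : S, yS' s = yS s + (if s ∈ N then δ else 0) := by
      intro s; by_cases hs : s ∈ N <;> simp [hyS', hs]
    rw [Finset.sum_congr rfl (fun s _ => hpt s), Finset.sum_add_distrib,
      Finset.sum_ite_mem, Finset.univ_inter, Finset.sum_const, nsmul_eq_mul]
  have hmon := hd.2 yB' yS' hfeas
  rw [DualValue, DualValue, e1, e2] at hmon
  have hNA : (N.card : ℝ) + 1 ≤ (A.card : ℝ) := by exact_mod_cast hcon
  nlinarith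

/-- Hall condition for sellers with positive dual in the tight subgraph. -/
lemma hall_cond_sellers (Mk : Market B S) (yB : B → ℝ) (yS : S → ℝ)
    (hd : DualOptimal Mk yB yS) (A : Finset S) (hA : ∀ s ∈ A, 0 < yS s) :
    A.card ≤ (A.biUnion (fun s => univ.filter (fun b =>
      (b, s) ∈ Mk.E ∧ edgeWeight Mk (b, s) = yB b + yS s))).card := by
  by_contra hcon
  push_neg at hcon
  set nbr : S → Finset B := fun s => univ.filter (fun b =>
      (b, s) ∈ Mk.E ∧ edgeWeight Mk (b, s) = yB b + yS s) with hnbr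
  set N := A.biUnion nbr with hNdef
  set slackS := Mk.E.filter (fun p => p.2 ∈ A ∧ edgeWeight Mk p ≠ yB p.1 + yS p.2)
    with hslackS
  set vals := insert (1:ℝ) ((A.image yS) ∪
      slackS.image (fun p => yB p.1 + yS p.2 - edgeWeight Mk p)) with hvals
  have hvne : vals.Nonempty := Finset.insert_nonempty _ _
  set δ := vals.min' hvne with hδdef
  have hδle : ∀ x ∈ vals, δ ≤ x := fun x hx => Finset.min'_le _ _ hx
  have hδpos : 0 < δ := by
    rw [hδdef, Finset.lt_min'_iff]
    intro x hx
    rcases Finset.mem_insert.1 hx with rfl | hx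
    · norm_num
    rcases Finset.mem_union.1 hx with hx | hx
    · obtain ⟨s, hs, rfl⟩ := Finset.mem_image.1 hx
      exact hA s hs
    · obtain ⟨p, hp, rfl⟩ := Finset.mem_image.1 hx
      obtain ⟨hpE, -, hne⟩ := Finset.mem_filter.1 hp
      have hle := hd.1.2.2 p hpE
      have : edgeWeight Mk p < yB p.1 + yS p.2 := lt_of_le_of_ne hle hne
      linarith
  set yS' := fun s => if s ∈ A then yS s - δ else yS s with hyS'
  set yB' := fun b => if b ∈ N then yB b + δ else yB b with hyB'
  have hfeas : DualFeasible Mk yB' yS' := by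
    refine ⟨fun b => ?_, fun s => ?_, fun p hp => ?_⟩
    · by_cases hb : b ∈ N
      · simp only [hyB', if_pos hb]; have := hd.1.1 b; linarith
      · simp only [hyB', if_neg hb]; exact hd.1.1 b
    · by_cases hs : s ∈ A
      · have : δ ≤ yS s := hδle _ (Finset.mem_insert_of_mem
          (Finset.mem_union_left _ (Finset.mem_image_of_mem _ hs)))
        simp only [hyS', if_pos hs]; linarith
      · simp only [hyS', if_neg hs]; exact hd.1.2.1 s
    · have hyB'ge : yB p.1 ≤ yB' p.1 := by
        by_cases hb : p.1 ∈ N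
        · simp only [hyB', if_pos hb]; linarith
        · simp only [hyB', if_neg hb]; exact le_refl _
      by_cases h1 : p.2 ∈ A
      · by_cases h2 : edgeWeight Mk p = yB p.1 + yS p.2
        · have hpn : p.1 ∈ N := by
            rw [hNdef]
            exact Finset.mem_biUnion.2 ⟨p.2, h1,
              Finset.mem_filter.2 ⟨Finset.mem_univ _, hp, h2⟩⟩
          simp only [hyB', hyS', if_pos h1, if_pos hpn]
          linarith [le_of_eq h2]
        · have hps : p ∈ slackS := Finset.mem_filter.2 ⟨hp, h1, h2⟩
          have hδs : δ ≤ yB p.1 + yS p.2 - edgeWeight Mk p :=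
            hδle _ (Finset.mem_insert_of_mem (Finset.mem_union_right _
              (Finset.mem_image_of_mem _ hps)))
          simp only [hyS', if_pos h1]
          linarith
      · simp only [hyS', if_neg h1]
        have := hd.1.2.2 p hp
        linarith
  have e1 : ∑ s : S, yS' s = (∑ s : S, yS s) - A.card * δ := by
    have hpt : ∀ s : S, yS' s = yS s - (if s ∈ A then δ else 0) := by
      intro s; by_cases hs : s ∈ A <;> simp [hyS', hs]
    rw [Finset.sum_congr rfl (fun s _ => hpt s), Finset.sum_sub_distrib,
      Finset.sum_ite_mem, Finset.univ_inter, Finset.sum_const, nsmul_eq_mul]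
  have e2 : ∑ b : B, yB' b = (∑ b : B, yB b) + N.card * δ := by
    have hpt : ∀ b : B, yB' b = yB b + (if b ∈ N then δ else 0) := by
      intro b; by_cases hb : b ∈ N <;> simp [hyB', hb]
    rw [Finset.sum_congr rfl (fun b _ => hpt b), Finset.sum_add_distrib,
      Finset.sum_ite_mem, Finset.univ_inter, Finset.sum_const, nsmul_eq_mul]
  have hmon := hd.2 yB' yS' hfeas
  rw [DualValue, DualValue, e1, e2] at hmon
  have hNA : (N.card : ℝ) + 1 ≤ (A.card : ℝ) := by exact_mod_cast hcon
  nlinarith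

/-- A tight matching saturating the buyers with positive dual. -/
lemma exists_saturating_buyers (Mk : Market B S) (yB : B → ℝ) (yS : S → ℝ)
    (hd : DualOptimal Mk yB yS) :
    ∃ M1 : Finset (B × S),
      (∀ p ∈ M1, p ∈ Mk.E ∧ edgeWeight Mk p = yB p.1 + yS p.2) ∧
      (∀ p ∈ M1, ∀ q ∈ M1, p.1 = q.1 → p = q) ∧
      (∀ p ∈ M1, ∀ q ∈ M1, p.2 = q.2 → p = q) ∧
      (∀ b, 0 < yB b → ∃ s, (b, s) ∈ M1) := by
  set nbr : B → Finset S := fun b => univ.filter (fun s =>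
      (b, s) ∈ Mk.E ∧ edgeWeight Mk (b, s) = yB b + yS s) with hnbr
  have hall := (Finset.all_card_le_biUnion_card_iff_exists_injective
      (fun i : {b : B // 0 < yB b} => nbr i.1)).1 ?_
  · obtain ⟨f, hfinj, hf⟩ := hall
    refine ⟨(univ : Finset {b : B // 0 < yB b}).image (fun i => (i.1, f i)),
      ?_, ?_, ?_, ?_⟩
    · intro p hp
      obtain ⟨i, -, rfl⟩ := Finset.mem_image.1 hp
      have := hf i
      rw [hnbr] at this
      exact (Finset.mem_filter.1 this).2
    · intro p hp q hq h
      obtain ⟨i, -, rfl⟩ := Finset.mem_image.1 hp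
      obtain ⟨j, -, rfl⟩ := Finset.mem_image.1 hq
      have : i = j := Subtype.ext h
      rw [this]
    · intro p hp q hq h
      obtain ⟨i, -, rfl⟩ := Finset.mem_image.1 hp
      obtain ⟨j, -, rfl⟩ := Finset.mem_image.1 hq
      have : i = j := hfinj h
      rw [this]
    · intro b hb
      exact ⟨f ⟨b, hb⟩, Finset.mem_image.2 ⟨⟨b, hb⟩, Finset.mem_univ _, rfl⟩⟩
  · intro F
    have hcard : (F.image Subtype.val).card = F.card :=
      Finset.card_image_of_injective _ Subtype.val_injective
    have hbi : F.biUnion (fun i => nbr i.1) = (F.image Subtype.val).biUnion nbr := by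
      ext x
      simp only [Finset.mem_biUnion, Finset.mem_image]
      constructor
      · rintro ⟨i, hi, hx⟩; exact ⟨i.1, ⟨i, hi, rfl⟩, hx⟩
      · rintro ⟨b, ⟨i, hi, rfl⟩, hx⟩; exact ⟨i, hi, hx⟩
    rw [hbi, ← hcard]
    exact hall_cond_buyers Mk yB yS hd _ (fun b hb => by
      obtain ⟨i, -, rfl⟩ := Finset.mem_image.1 hb; exact i.2)

/-- A tight matching saturating the sellers with positive dual. -/
lemma exists_saturating_sellers (Mk : Market B S) (yB : B → ℝ) (yS : S → ℝ)
    (hd : DualOptimal Mk yB yS) :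
    ∃ M2 : Finset (B × S),
      (∀ p ∈ M2, p ∈ Mk.E ∧ edgeWeight Mk p = yB p.1 + yS p.2) ∧
      (∀ p ∈ M2, ∀ q ∈ M2, p.1 = q.1 → p = q) ∧
      (∀ p ∈ M2, ∀ q ∈ M2, p.2 = q.2 → p = q) ∧
      (∀ s, 0 < yS s → ∃ b, (b, s) ∈ M2) := by
  set nbr : S → Finset B := fun s => univ.filter (fun b =>
      (b, s) ∈ Mk.E ∧ edgeWeight Mk (b, s) = yB b + yS s) with hnbr
  have hall := (Finset.all_card_le_biUnion_card_iff_exists_injective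
      (fun i : {s : S // 0 < yS s} => nbr i.1)).1 ?_
  · obtain ⟨f, hfinj, hf⟩ := hall
    refine ⟨(univ : Finset {s : S // 0 < yS s}).image (fun i => (f i, i.1)),
      ?_, ?_, ?_, ?_⟩
    · intro p hp
      obtain ⟨i, -, rfl⟩ := Finset.mem_image.1 hp
      have := hf i
      rw [hnbr] at this
      exact (Finset.mem_filter.1 this).2
    · intro p hp q hq h
      obtain ⟨i, -, rfl⟩ := Finset.mem_image.1 hp
      obtain ⟨j, -, rfl⟩ := Finset.mem_image.1 hq
      have : i = j := hfinj h
      rw [this]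
    · intro p hp q hq h
      obtain ⟨i, -, rfl⟩ := Finset.mem_image.1 hp
      obtain ⟨j, -, rfl⟩ := Finset.mem_image.1 hq
      have : i = j := Subtype.ext h
      rw [this]
    · intro s hs
      exact ⟨f ⟨s, hs⟩, Finset.mem_image.2 ⟨⟨s, hs⟩, Finset.mem_univ _, rfl⟩⟩
  · intro F
    have hcard : (F.image Subtype.val).card = F.card :=
      Finset.card_image_of_injective _ Subtype.val_injective
    have hbi : F.biUnion (fun i => nbr i.1) = (F.image Subtype.val).biUnion nbr := by
      ext x
      simp only [Finset.mem_biUnion, Finset.mem_image]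
      constructor
      · rintro ⟨i, hi, hx⟩; exact ⟨i.1, ⟨i, hi, rfl⟩, hx⟩
      · rintro ⟨s, ⟨i, hi, rfl⟩, hx⟩; exact ⟨i, hi, hx⟩
    rw [hbi, ← hcard]
    exact hall_cond_sellers Mk yB yS hd _ (fun s hs => by
      obtain ⟨i, -, rfl⟩ := Finset.mem_image.1 hs; exact i.2)

/-- Mendelsohn–Dulmage style merge: a single tight matching saturating both
the buyers and the sellers with positive dual. -/
lemma exists_tight_saturating (Mk : Market B S) (yB : B → ℝ) (yS : S → ℝ)
    (hd : DualOptimal Mk yB yS) :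
    ∃ M : Finset (B × S), IsMatching Mk M ∧
      (∀ p ∈ M, edgeWeight Mk p = yB p.1 + yS p.2) ∧
      (∀ b, 0 < yB b → ∃ s, (b, s) ∈ M) ∧
      (∀ s, 0 < yS s → ∃ b, (b, s) ∈ M) := by
  obtain ⟨M1, hM1t, hM1f, hM1s, hM1sat⟩ := exists_saturating_buyers Mk yB yS hd
  obtain ⟨M2, hM2t, hM2f, hM2s, hM2sat⟩ := exists_saturating_sellers Mk yB yS hd
  set P : Finset (B × S) → Prop := fun M' =>
    (∀ p ∈ M', p ∈ Mk.E ∧ edgeWeight Mk p = yB p.1 + yS p.2) ∧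
    (∀ p ∈ M', ∀ q ∈ M', p.1 = q.1 → p = q) ∧
    (∀ p ∈ M', ∀ q ∈ M', p.2 = q.2 → p = q) ∧
    (∀ b, 0 < yB b → ∃ s, (b, s) ∈ M') with hP
  set C := Mk.E.powerset.filter P with hC
  have hM1C : M1 ∈ C := by
    rw [hC, Finset.mem_filter, Finset.mem_powerset]
    exact ⟨fun p hp => (hM1t p hp).1, hM1t, hM1f, hM1s, hM1sat⟩
  obtain ⟨Mst, hMstC, hmin⟩ :=
    Finset.exists_min_image C (fun M' => (M2 \ M').card) ⟨M1, hM1C⟩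
  rw [hC, Finset.mem_filter, Finset.mem_powerset] at hMstC
  obtain ⟨hMstE, hMstt, hMstfst, hMstsnd, hMstsat⟩ := hMstC
  refine ⟨Mst, ⟨hMstE, hMstfst, hMstsnd⟩, fun p hp => (hMstt p hp).2, hMstsat, ?_⟩
  -- show Mst saturates sellers with positive dual
  intro s hspos
  by_contra hnos
  push_neg at hnos
  have hnos' : ∀ b, (b, s) ∉ Mst := hnos
  obtain ⟨b, hbs⟩ := hM2sat s hspos
  -- build a better candidate M'
  by_cases hb : ∃ s', (b, s') ∈ Mst
  · obtain ⟨s', hs'⟩ := hb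
    have hss' : s ≠ s' := fun h => hnos' b (h ▸ hs')
    have hbs'M2 : (b, s') ∉ M2 := by
      intro h
      exact hss' (congrArg Prod.snd (hM2f (b, s) hbs (b, s') h rfl))
    set M' := insert (b, s) (Mst.erase (b, s')) with hM'
    have hM'C : M' ∈ C := by
      rw [hC, Finset.mem_filter, Finset.mem_powerset]
      refine ⟨?_, ?_, ?_, ?_, ?_⟩
      · intro p hp
        rcases Finset.mem_insert.1 hp with rfl | hp
        · exact (hM2t _ hbs).1
        · exact hMstE (Finset.mem_of_mem_erase hp)
      · intro p hp
        rcases Finset.mem_insert.1 hp with rfl | hp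
        · exact hM2t _ hbs
        · exact hMstt _ (Finset.mem_of_mem_erase hp)
      · intro p hp q hq h
        rcases Finset.mem_insert.1 hp with rfl | hp <;>
          rcases Finset.mem_insert.1 hq with rfl | hq
        · rfl
        · exfalso
          have hqM : q ∈ Mst := Finset.mem_of_mem_erase hq
          have : q = (b, s') := hMstfst q hqM (b, s') hs' (by rw [← h])
          exact (Finset.mem_erase.1 hq).1 this
        · exfalso
          have hpM : p ∈ Mst := Finset.mem_of_mem_erase hp
          have : p = (b, s') := hMstfst p hpM (b, s') hs' (by rw [h])
          exact (Finset.mem_erase.1 hp).1 this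
        · exact hMstfst p (Finset.mem_of_mem_erase hp) q (Finset.mem_of_mem_erase hq) h
      · intro p hp q hq h
        rcases Finset.mem_insert.1 hp with rfl | hp <;>
          rcases Finset.mem_insert.1 hq with rfl | hq
        · rfl
        · exfalso
          have hqM : q ∈ Mst := Finset.mem_of_mem_erase hq
          apply hnos' q.1
          rw [show s = q.2 from h]
          exact hqM
        · exfalso
          have hpM : p ∈ Mst := Finset.mem_of_mem_erase hp
          apply hnos' p.1
          rw [show s = p.2 from h.symm]
          exact hpM
        · exact hMstsnd p (Finset.mem_of_mem_erase hp) q (Finset.mem_of_mem_erase hq) h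
      · intro b' hb'
        obtain ⟨s0, hs0⟩ := hMstsat b' hb'
        by_cases h : (b', s0) = (b, s')
        · refine ⟨s, ?_⟩
          have : b' = b := congrArg Prod.fst h
          rw [this]
          exact Finset.mem_insert_self _ _
        · exact ⟨s0, Finset.mem_insert_of_mem (Finset.mem_erase.2 ⟨h, hs0⟩)⟩
    have hss : M2 \ M' ⊂ M2 \ Mst := by
      constructor
      · intro x hx
        obtain ⟨hx2, hxn⟩ := Finset.mem_sdiff.1 hx
        refine Finset.mem_sdiff.2 ⟨hx2, fun hxM => hxn ?_⟩
        have hxne : x ≠ (b, s') := fun h => hbs'M2 (h ▸ hx2)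
        exact Finset.mem_insert_of_mem (Finset.mem_erase.2 ⟨hxne, hxM⟩)
      · intro hsub
        have h1 : (b, s) ∈ M2 \ Mst := Finset.mem_sdiff.2 ⟨hbs, hnos' b⟩
        have h2 : (b, s) ∉ M2 \ M' := fun h =>
          (Finset.mem_sdiff.1 h).2 (Finset.mem_insert_self _ _)
        exact h2 (hsub h1)
    have := hmin M' hM'C
    have := Finset.card_lt_card hss
    omega
  · push_neg at hb
    set M' := insert (b, s) Mst with hM'
    have hM'C : M' ∈ C := by
      rw [hC, Finset.mem_filter, Finset.mem_powerset]
      refine ⟨?_, ?_, ?_, ?_, ?_⟩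
      · intro p hp
        rcases Finset.mem_insert.1 hp with rfl | hp
        · exact (hM2t _ hbs).1
        · exact hMstE hp
      · intro p hp
        rcases Finset.mem_insert.1 hp with rfl | hp
        · exact hM2t _ hbs
        · exact hMstt _ hp
      · intro p hp q hq h
        rcases Finset.mem_insert.1 hp with rfl | hp <;>
          rcases Finset.mem_insert.1 hq with rfl | hq
        · rfl
        · exact absurd (show (b, q.2) ∈ Mst by rw [show b = q.1 from h]; exact hq) (hb q.2)
        · exact absurd (show (b, p.2) ∈ Mst by rw [show b = p.1 from h.symm]; exact hp) (hb p.2)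
        · exact hMstfst p hp q hq h
      · intro p hp q hq h
        rcases Finset.mem_insert.1 hp with rfl | hp <;>
          rcases Finset.mem_insert.1 hq with rfl | hq
        · rfl
        · exact absurd (show (q.1, s) ∈ Mst by rw [show s = q.2 from h]; exact hq) (hnos' q.1)
        · exact absurd (show (p.1, s) ∈ Mst by rw [show s = p.2 from h.symm]; exact hp) (hnos' p.1)
        · exact hMstsnd p hp q hq h
      · intro b' hb'
        obtain ⟨s0, hs0⟩ := hMstsat b' hb'
        exact ⟨s0, Finset.mem_insert_of_mem hs0⟩
    have hss : M2 \ M' ⊂ M2 \ Mst := by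
      constructor
      · intro x hx
        obtain ⟨hx2, hxn⟩ := Finset.mem_sdiff.1 hx
        exact Finset.mem_sdiff.2 ⟨hx2, fun hxM => hxn (Finset.mem_insert_of_mem hxM)⟩
      · intro hsub
        have h1 : (b, s) ∈ M2 \ Mst := Finset.mem_sdiff.2 ⟨hbs, hnos' b⟩
        have h2 : (b, s) ∉ M2 \ M' := fun h =>
          (Finset.mem_sdiff.1 h).2 (Finset.mem_insert_self _ _)
        exact h2 (hsub h1)
    have := hmin M' hM'C
    have := Finset.card_lt_card hss
    omega

/-- There is a matching whose social welfare equals the optimal dual value. -/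
lemma exists_good_matching (Mk : Market B S) (yB : B → ℝ) (yS : S → ℝ)
    (hd : DualOptimal Mk yB yS) :
    ∃ M : Finset (B × S), IsMatching Mk M ∧ SW Mk M = DualValue yB yS := by
  obtain ⟨M, hM, ht, hsatB, hsatS⟩ := exists_tight_saturating Mk yB yS hd
  refine ⟨M, hM, ?_⟩
  have e0 : SW Mk M = ∑ p ∈ M, (yB p.1 + yS p.2) := by
    unfold SW
    exact Finset.sum_congr rfl (fun p hp => ht p hp)
  rw [e0, Finset.sum_add_distrib, DualValue]
  have eB : ∑ p ∈ M, yB p.1 = ∑ b : B, yB b := by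
    have him := Finset.sum_image (s := M) (f := yB) (g := Prod.fst)
      (fun p hp q hq h => hM.2.1 p hp q hq h)
    rw [← him]
    apply Finset.sum_subset (Finset.subset_univ _)
    intro b _ hbim
    by_contra hne
    have hbpos : 0 < yB b := lt_of_le_of_ne (hd.1.1 b) (Ne.symm hne)
    obtain ⟨s, hs⟩ := hsatB b hbpos
    exact hbim (Finset.mem_image.2 ⟨(b, s), hs, rfl⟩)
  have eS : ∑ p ∈ M, yS p.2 = ∑ s : S, yS s := by
    have him := Finset.sum_image (s := M) (f := yS) (g := Prod.snd)
      (fun p hp q hq h => hM.2.2 p hp q hq h)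
    rw [← him]
    apply Finset.sum_subset (Finset.subset_univ _)
    intro s _ hsim
    by_contra hne
    have hspos : 0 < yS s := lt_of_le_of_ne (hd.1.2.1 s) (Ne.symm hne)
    obtain ⟨b, hb⟩ := hsatS s hspos
    exact hsim (Finset.mem_image.2 ⟨(b, s), hb, rfl⟩)
  rw [eB, eS]

end Helpers

open scoped Classical in
/-- optimal primal/dual solutions coming from a matching `Π` and a valid
price function `P` yield a stable state; in particular the complementary-slackness sum
`Σ_{(B,S)∈Π} (P(S) − P(B)) + Σ_{Z∉Π} y^P(Z) = 0`, which forces equal prices on matched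
pairs and valuation prices for unmatched agents. -/
theorem primal_dual_optimal_implies_stable [DecidableEq B] [DecidableEq S]
    (Mk : Market B S) (st : MState B S)
    (hmatching : IsMatching Mk st.M)
    (hPB : ∀ b, st.PB b ≤ Mk.valB b) (hPS : ∀ s, Mk.valS s ≤ st.PS s)
    (hprimal : PrimalOptimal Mk (charVec st.M))
    (hdual : DualOptimal Mk (fun b => Mk.valB b - st.PB b) (fun s => st.PS s - Mk.valS s)) :
    IsStable Mk st ∧
    (∑ p ∈ st.M, (st.PS p.2 - st.PB p.1)
      + ∑ b ∈ Finset.univ.filter (fun b : B => ¬ BMatched st b), (Mk.valB b - st.PB b)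
      + ∑ s ∈ Finset.univ.filter (fun s : S => ¬ SMatched st s), (st.PS s - Mk.valS s) = 0) ∧
    (∀ p ∈ st.M, st.PB p.1 = st.PS p.2) ∧
    (∀ b, ¬ BMatched st b → st.PB b = Mk.valB b) ∧
    (∀ s, ¬ SMatched st s → st.PS s = Mk.valS s) := by
  classical
  obtain ⟨hfB, hfS, hfE⟩ := hdual.1
  have h1 : ∀ p ∈ Mk.E, st.PB p.1 ≤ st.PS p.2 := by
    intro p hp
    have := hfE p hp
    simp only [edgeWeight] at this
    linarith
  obtain ⟨M', hM'match, hM'val⟩ := exists_good_matching Mk _ _ hdual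
  have hkey : DualValue (fun b => Mk.valB b - st.PB b) (fun s => st.PS s - Mk.valS s)
      ≤ SW Mk st.M := by
    have h2 := hprimal.2 (charVec M') (charVec_feasible Mk M' hM'match)
    rw [charVec_value Mk M' hM'match.1, charVec_value Mk st.M hmatching.1] at h2
    linarith [hM'val]
  -- split the dual sums according to matched/unmatched
  have eB : ∑ b : B, (Mk.valB b - st.PB b)
      = (∑ p ∈ st.M, (Mk.valB p.1 - st.PB p.1))
        + ∑ b ∈ Finset.univ.filter (fun b : B => ¬ BMatched st b), (Mk.valB b - st.PB b) := by
    rw [← Finset.sum_filter_add_sum_filter_not univ (fun b => BMatched st b)]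
    congr 1
    have himg : univ.filter (fun b => BMatched st b) = st.M.image Prod.fst := by
      ext b
      simp only [Finset.mem_filter, Finset.mem_univ, true_and, Finset.mem_image]
      constructor
      · rintro ⟨s, hs⟩; exact ⟨(b, s), hs, rfl⟩
      · rintro ⟨p, hp, rfl⟩; exact ⟨p.2, hp⟩
    rw [himg]
    exact Finset.sum_image (fun p hp q hq h => hmatching.2.1 p hp q hq h)
  have eS : ∑ s : S, (st.PS s - Mk.valS s)
      = (∑ p ∈ st.M, (st.PS p.2 - Mk.valS p.2))
        + ∑ s ∈ Finset.univ.filter (fun s : S => ¬ SMatched st s), (st.PS s - Mk.valS s) := by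
    rw [← Finset.sum_filter_add_sum_filter_not univ (fun s => SMatched st s)]
    congr 1
    have himg : univ.filter (fun s => SMatched st s) = st.M.image Prod.snd := by
      ext s
      simp only [Finset.mem_filter, Finset.mem_univ, true_and, Finset.mem_image]
      constructor
      · rintro ⟨b, hb⟩; exact ⟨(b, s), hb, rfl⟩
      · rintro ⟨p, hp, rfl⟩; exact ⟨p.1, hp⟩
    rw [himg]
    exact Finset.sum_image (fun p hp q hq h => hmatching.2.2 p hp q hq h)
  have hM3 : ∑ p ∈ st.M, (st.PS p.2 - st.PB p.1)
      = (∑ p ∈ st.M, (Mk.valB p.1 - st.PB p.1)) + (∑ p ∈ st.M, (st.PS p.2 - Mk.valS p.2))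
        - ∑ p ∈ st.M, (Mk.valB p.1 - Mk.valS p.2) := by
    rw [← Finset.sum_add_distrib, ← Finset.sum_sub_distrib]
    exact Finset.sum_congr rfl (fun p _ => by ring)
  have hDV : DualValue (fun b => Mk.valB b - st.PB b) (fun s => st.PS s - Mk.valS s)
      = (∑ b : B, (Mk.valB b - st.PB b)) + ∑ s : S, (st.PS s - Mk.valS s) := rfl
  have hSW : SW Mk st.M = ∑ p ∈ st.M, (Mk.valB p.1 - Mk.valS p.2) := rfl
  have hTeq : (∑ p ∈ st.M, (st.PS p.2 - st.PB p.1))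
      + (∑ b ∈ Finset.univ.filter (fun b : B => ¬ BMatched st b), (Mk.valB b - st.PB b))
      + (∑ s ∈ Finset.univ.filter (fun s : S => ¬ SMatched st s), (st.PS s - Mk.valS s))
      = DualValue (fun b => Mk.valB b - st.PB b) (fun s => st.PS s - Mk.valS s)
        - SW Mk st.M := by
    rw [hDV, hSW, eB, eS]
    linarith [hM3]
  have hs1 : 0 ≤ ∑ p ∈ st.M, (st.PS p.2 - st.PB p.1) :=
    Finset.sum_nonneg (fun p hp => by linarith [h1 p (hmatching.1 hp)])
  have hs2 : 0 ≤ ∑ b ∈ Finset.univ.filter (fun b : B => ¬ BMatched st b),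
      (Mk.valB b - st.PB b) :=
    Finset.sum_nonneg (fun b _ => by linarith [hPB b])
  have hs3 : 0 ≤ ∑ s ∈ Finset.univ.filter (fun s : S => ¬ SMatched st s),
      (st.PS s - Mk.valS s) :=
    Finset.sum_nonneg (fun s _ => by linarith [hPS s])
  have hz1sum : ∑ p ∈ st.M, (st.PS p.2 - st.PB p.1) = 0 := by linarith
  have hz2sum : ∑ b ∈ Finset.univ.filter (fun b : B => ¬ BMatched st b),
      (Mk.valB b - st.PB b) = 0 := by linarith
  have hz3sum : ∑ s ∈ Finset.univ.filter (fun s : S => ¬ SMatched st s),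
      (st.PS s - Mk.valS s) = 0 := by linarith
  have hz1 : ∀ p ∈ st.M, st.PS p.2 - st.PB p.1 = 0 :=
    (Finset.sum_eq_zero_iff_of_nonneg
      (fun p hp => by linarith [h1 p (hmatching.1 hp)])).1 hz1sum
  have hz2 : ∀ b ∈ Finset.univ.filter (fun b : B => ¬ BMatched st b),
      Mk.valB b - st.PB b = 0 :=
    (Finset.sum_eq_zero_iff_of_nonneg (fun b _ => by linarith [hPB b])).1 hz2sum
  have hz3 : ∀ s ∈ Finset.univ.filter (fun s : S => ¬ SMatched st s),
      st.PS s - Mk.valS s = 0 :=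
    (Finset.sum_eq_zero_iff_of_nonneg (fun s _ => by linarith [hPS s])).1 hz3sum
  have hub : ∀ b, ¬ BMatched st b → st.PB b = Mk.valB b := by
    intro b hb
    have := hz2 b (Finset.mem_filter.2 ⟨Finset.mem_univ _, hb⟩)
    linarith
  have hus : ∀ s, ¬ SMatched st s → st.PS s = Mk.valS s := by
    intro s hs
    have := hz3 s (Finset.mem_filter.2 ⟨Finset.mem_univ _, hs⟩)
    linarith
  have hmp : ∀ p ∈ st.M, st.PB p.1 = st.PS p.2 := by
    intro p hp
    have := hz1 p hp
    linarith
  refine ⟨⟨h1, hub, hus, hmp⟩, by linarith, hmp, hub, hus⟩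
end

section
/- In a market whose trading graph is the complete bipartite graph, under the double-oral-auction mechanism with price increment ε started from a valid starting state, at every reachable state (P, Π): for every buyer-seller pair (B,S), if P(B) > P(S) then both B and S are matched in Π. -/
open Finset

variable {B S : Type*} [Fintype B] [Fintype S]

/-- `x` is an integer multiple of `ε`. -/
def MulEps (ε x : ℝ) : Prop := ∃ k : ℤ, x = k * ε

variable [DecidableEq B] [DecidableEq S]

/-- Seller `s` is ε-interested in buyer `b` bidding `b'`. -/
def SellerInterested (Mk : Market B S) (ε : ℝ) (st : MState B S) (b' : ℝ) (b : B) (s : S) : Prop :=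
  (b, s) ∈ Mk.E ∧ ((¬ SMatched st s ∧ st.PS s ≤ b') ∨ (SMatched st s ∧ st.PS s + ε ≤ b'))

/-- Buyer `b` is ε-interested in seller `s` offering `s'`. -/
def BuyerInterested (Mk : Market B S) (ε : ℝ) (st : MState B S) (s' : ℝ) (s : S) (b : B) : Prop :=
  (b, s) ∈ Mk.E ∧ ((¬ BMatched st b ∧ s' ≤ st.PB b) ∨ (BMatched st b ∧ s' + ε ≤ st.PB b))

/-- Increment rule for a buyer: a new bid is at most (lowest neighbouring offer + ε) and
at most the lowest offer of an unmatched neighbouring seller. -/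
def BuyIncrOK (Mk : Market B S) (ε : ℝ) (st : MState B S) (b : B) (b' : ℝ) : Prop :=
  (∀ s, (b, s) ∈ Mk.E → b' ≤ st.PS s + ε) ∧
  (∀ s, (b, s) ∈ Mk.E → ¬ SMatched st s → b' ≤ st.PS s)

/-- Increment rule for a seller. -/
def SellIncrOK (Mk : Market B S) (ε : ℝ) (st : MState B S) (s : S) (s' : ℝ) : Prop :=
  (∀ b, (b, s) ∈ Mk.E → st.PB b - ε ≤ s') ∧
  (∀ b, (b, s) ∈ Mk.E → ¬ BMatched st b → st.PB b ≤ s')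

/-- Match `b` with `s` at price `price`, displacing any previous partner of `s` (resp. `b`)
and equalizing the two submitted prices. -/
def matchPair (st : MState B S) (b : B) (s : S) (price : ℝ) : MState B S where
  PB := Function.update st.PB b price
  PS := Function.update st.PS s price
  M := insert (b, s) (st.M.filter fun p => p.1 ≠ b ∧ p.2 ≠ s)

/-- One legal move of the DOA mechanism (Mechanism 1): an arbitrary recognized unmatched
agent either submits an improving price (respecting the minimum-increment and increment
rules, when no counterpart is interested) or matches with an ε-interested counterpart,
giving priority to unmatched counterparts. -/
inductive Step (Mk : Market B S) (ε : ℝ) : MState B S → MState B S → Prop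
  | buyBid (st : MState B S) (b : B) (b' : ℝ) :
      ¬ BMatched st b → st.PB b < b' → b' ≤ Mk.valB b → MulEps ε b' →
      BuyIncrOK Mk ε st b b' →
      (∀ s, ¬ SellerInterested Mk ε st b' b s) →
      Step Mk ε st ⟨Function.update st.PB b b', st.PS, st.M⟩
  | buyMatch (st : MState B S) (b : B) (b' : ℝ) (s : S) :
      ¬ BMatched st b → st.PB b ≤ b' → b' ≤ Mk.valB b → MulEps ε b' →
      BuyIncrOK Mk ε st b b' →
      SellerInterested Mk ε st b' b s →
      ((∃ s₀, SellerInterested Mk ε st b' b s₀ ∧ ¬ SMatched st s₀) → ¬ SMatched st s) →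
      Step Mk ε st (matchPair st b s b')
  | sellOffer (st : MState B S) (s : S) (s' : ℝ) :
      ¬ SMatched st s → s' < st.PS s → Mk.valS s ≤ s' → MulEps ε s' →
      SellIncrOK Mk ε st s s' →
      (∀ b, ¬ BuyerInterested Mk ε st s' s b) →
      Step Mk ε st ⟨st.PB, Function.update st.PS s s', st.M⟩
  | sellMatch (st : MState B S) (s : S) (s' : ℝ) (b : B) :
      ¬ SMatched st s → s' ≤ st.PS s → Mk.valS s ≤ s' → MulEps ε s' →
      SellIncrOK Mk ε st s s' →
      BuyerInterested Mk ε st s' s b →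
      ((∃ b₀, BuyerInterested Mk ε st s' s b₀ ∧ ¬ BMatched st b₀) → ¬ BMatched st b) →
      Step Mk ε st (matchPair st b s s')

/-- A valid starting state: valid, bids below offers on every edge, prices in `[0,1]`
and integer multiples of `ε`. -/
def ValidStart (Mk : Market B S) (ε : ℝ) (st : MState B S) : Prop :=
  ValidState Mk st ∧ (∀ p ∈ Mk.E, st.PB p.1 ≤ st.PS p.2) ∧
  (∀ b, 0 ≤ st.PB b) ∧ (∀ s, st.PS s ≤ 1) ∧
  (∀ b, MulEps ε (st.PB b)) ∧ (∀ s, MulEps ε (st.PS s))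

/-- Reachability by a sequence of legal moves. -/
def Reachable (Mk : Market B S) (ε : ℝ) : MState B S → MState B S → Prop :=
  Relation.ReflTransGen (Step Mk ε)

/-- Combined invariant maintained by the mechanism. -/
def DOAInv (Mk : Market B S) (ε : ℝ) (st : MState B S) : Prop :=
  (∀ b, MulEps ε (st.PB b)) ∧ (∀ s, MulEps ε (st.PS s)) ∧
  (∀ (b : B) (s : S), st.PB b - st.PS s ≤ ε) ∧
  (∀ (b : B) (s : S), st.PS s < st.PB b → BMatched st b ∧ SMatched st s) ∧
  (∀ p ∈ st.M, st.PB p.1 = st.PS p.2)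

private lemma mulEps_le {ε x y : ℝ} (hε : 0 < ε) (hx : MulEps ε x) (hy : MulEps ε y)
    (h : x < y + ε) : x ≤ y := by
  obtain ⟨k, rfl⟩ := hx; obtain ⟨m, rfl⟩ := hy
  have h1 : (k : ℝ) * ε < (m + 1) * ε := by linarith
  have h2 : (k : ℝ) < m + 1 := lt_of_mul_lt_mul_right h1 hε.le
  have h3 : k < m + 1 := by exact_mod_cast h2
  have h4 : (k : ℝ) ≤ m := by exact_mod_cast (by omega : k ≤ m)
  nlinarith

private lemma memMatch {st : MState B S} {b : B} {s : S} {pr : ℝ} {q : B × S} :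
    q ∈ (matchPair st b s pr).M ↔ q = (b, s) ∨ (q ∈ st.M ∧ q.1 ≠ b ∧ q.2 ≠ s) := by
  simp [matchPair]

private lemma inv_step {Mk : Market B S} (hE : Mk.E = Finset.univ) {ε : ℝ} (hε : 0 < ε)
    {st st' : MState B S} (hst : DOAInv Mk ε st) (h : Step Mk ε st st') : DOAInv Mk ε st' := by
  obtain ⟨mulB, mulS, gap, hover, eqm⟩ := hst
  have edge : ∀ (b : B) (s : S), (b, s) ∈ Mk.E := fun b s => by
    rw [hE]; exact Finset.mem_univ _
  cases h with
  | buyBid b b' hunm hlt hval hmul hok hni =>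
    -- key: b' is at most every offer
    have key : ∀ s, b' ≤ st.PS s := by
      intro s
      have hni' := hni s
      rw [SellerInterested, not_and, not_or] at hni'
      have ⟨h1, h2⟩ := hni' (edge b s)
      by_cases hs : SMatched st s
      · have : ¬ (st.PS s + ε ≤ b') := fun hc => h2 ⟨hs, hc⟩
        exact mulEps_le hε hmul (mulS s) (by linarith [not_le.mp this])
      · have : ¬ (st.PS s ≤ b') := fun hc => h1 ⟨hs, hc⟩
        linarith [not_le.mp this]
    refine ⟨?_, mulS, ?_, ?_, ?_⟩
    · intro b₂
      show MulEps ε (Function.update st.PB b b' b₂)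
      rw [Function.update_apply]; split_ifs
      · exact hmul
      · exact mulB b₂
    · intro b₂ s₂
      show Function.update st.PB b b' b₂ - st.PS s₂ ≤ ε
      rw [Function.update_apply]; split_ifs
      · linarith [key s₂]
      · exact gap b₂ s₂
    · intro b₂ s₂ hlt'
      have hlt2 : st.PS s₂ < Function.update st.PB b b' b₂ := hlt'
      rw [Function.update_apply] at hlt2; split_ifs at hlt2
      · exact absurd hlt2 (not_lt.mpr (key s₂))
      · exact hover b₂ s₂ hlt2
    · intro p hp
      have hne : p.1 ≠ b := fun hc => hunm ⟨p.2, by rw [← hc]; exact hp⟩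
      show Function.update st.PB b b' p.1 = st.PS p.2
      rw [Function.update_of_ne hne]; exact eqm p hp
  | sellOffer s s' hunm hlt hval hmul hok hni =>
    have key : ∀ b, st.PB b ≤ s' := by
      intro b
      have hni' := hni b
      rw [BuyerInterested, not_and, not_or] at hni'
      have ⟨h1, h2⟩ := hni' (edge b s)
      by_cases hb : BMatched st b
      · have : ¬ (s' + ε ≤ st.PB b) := fun hc => h2 ⟨hb, hc⟩
        exact mulEps_le hε (mulB b) hmul (by linarith [not_le.mp this])
      · have : ¬ (s' ≤ st.PB b) := fun hc => h1 ⟨hb, hc⟩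
        linarith [not_le.mp this]
    refine ⟨mulB, ?_, ?_, ?_, ?_⟩
    · intro s₂
      show MulEps ε (Function.update st.PS s s' s₂)
      rw [Function.update_apply]; split_ifs
      · exact hmul
      · exact mulS s₂
    · intro b₂ s₂
      show st.PB b₂ - Function.update st.PS s s' s₂ ≤ ε
      rw [Function.update_apply]; split_ifs
      · linarith [hok.1 b₂ (edge b₂ s)]
      · exact gap b₂ s₂
    · intro b₂ s₂ hlt'
      have hlt2 : Function.update st.PS s s' s₂ < st.PB b₂ := hlt'
      rw [Function.update_apply] at hlt2; split_ifs at hlt2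
      · exact absurd hlt2 (not_lt.mpr (key b₂))
      · exact hover b₂ s₂ hlt2
    · intro p hp
      have hne : p.2 ≠ s := fun hc => hunm ⟨p.1, by rw [← hc]; exact hp⟩
      show st.PB p.1 = Function.update st.PS s s' p.2
      rw [Function.update_of_ne hne]; exact eqm p hp
  | buyMatch b b' s hunm hge hval hmul hok hint hpri =>
    have hPSs : st.PS s ≤ b' := by
      rcases hint.2 with ⟨_, h⟩ | ⟨_, h⟩ <;> linarith
    have hSm : SMatched st s → st.PS s + ε ≤ b' := by
      intro hm
      rcases hint.2 with ⟨h, _⟩ | ⟨_, h⟩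
      · exact absurd hm h
      · exact h
    have unmB : ∀ b₂, ¬ BMatched st b₂ → ∀ s₂, st.PB b₂ ≤ st.PS s₂ := fun b₂ hb₂ s₂ =>
      le_of_not_gt fun hc => hb₂ (hover b₂ s₂ hc).1
    have bm : BMatched (matchPair st b s b') b := ⟨s, memMatch.mpr (Or.inl rfl)⟩
    have sm : SMatched (matchPair st b s b') s := ⟨b, memMatch.mpr (Or.inl rfl)⟩
    have survB : ∀ {b₂ s₃}, (b₂, s₃) ∈ st.M → b₂ ≠ b → s₃ ≠ s →
        BMatched (matchPair st b s b') b₂ := fun hm hb hs =>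
      ⟨_, memMatch.mpr (Or.inr ⟨hm, hb, hs⟩)⟩
    have survS : ∀ {b₃ s₂}, (b₃, s₂) ∈ st.M → b₃ ≠ b → s₂ ≠ s →
        SMatched (matchPair st b s b') s₂ := fun hm hb hs =>
      ⟨_, memMatch.mpr (Or.inr ⟨hm, hb, hs⟩)⟩
    refine ⟨?_, ?_, ?_, ?_, ?_⟩
    · intro b₂
      show MulEps ε (Function.update st.PB b b' b₂)
      rw [Function.update_apply]; split_ifs
      · exact hmul
      · exact mulB b₂
    · intro s₂
      show MulEps ε (Function.update st.PS s b' s₂)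
      rw [Function.update_apply]; split_ifs
      · exact hmul
      · exact mulS s₂
    · intro b₂ s₂
      show Function.update st.PB b b' b₂ - Function.update st.PS s b' s₂ ≤ ε
      rw [Function.update_apply, Function.update_apply]
      by_cases hb : b₂ = b <;> by_cases hs : s₂ = s
      · rw [if_pos hb, if_pos hs]; linarith
      · rw [if_pos hb, if_neg hs]; linarith [hok.1 s₂ (edge b s₂)]
      · rw [if_neg hb, if_pos hs]; linarith [gap b₂ s]
      · rw [if_neg hb, if_neg hs]; exact gap b₂ s₂
    · intro b₂ s₂ hlt'
      have hlt2 : Function.update st.PS s b' s₂ < Function.update st.PB b b' b₂ := hlt'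
      rw [Function.update_apply, Function.update_apply] at hlt2
      by_cases hb : b₂ = b <;> by_cases hs : s₂ = s
      · rw [if_pos hb, if_pos hs] at hlt2; exact absurd hlt2 (lt_irrefl _)
      · rw [if_pos hb, if_neg hs] at hlt2
        refine ⟨by rw [hb]; exact bm, ?_⟩
        by_cases hm2 : SMatched st s₂
        · obtain ⟨b₃, hb₃⟩ := hm2
          exact survS hb₃ (fun hc => hunm ⟨s₂, hc ▸ hb₃⟩) hs
        · exact absurd hlt2 (not_lt.mpr (hok.2 s₂ (edge b s₂) hm2))
      · rw [if_neg hb, if_pos hs] at hlt2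
        refine ⟨?_, by rw [hs]; exact sm⟩
        by_cases hm2 : BMatched st b₂
        · obtain ⟨s₃, hs₃⟩ := hm2
          by_cases hss : s₃ = s
          · have hs₃' : (b₂, s) ∈ st.M := hss ▸ hs₃
            have heq : st.PB b₂ = st.PS s := eqm (b₂, s) hs₃'
            have h1 := hSm ⟨b₂, hs₃'⟩
            exact absurd hlt2 (not_lt.mpr (by linarith))
          · exact survB hs₃ hb hss
        · exact absurd hlt2 (not_lt.mpr (le_trans (unmB b₂ hm2 s) hPSs))
      · rw [if_neg hb, if_neg hs] at hlt2
        obtain ⟨⟨s₃, hs₃⟩, b₃, hb₃⟩ := hover b₂ s₂ hlt2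
        refine ⟨?_, survS hb₃ (fun hc => hunm ⟨s₂, hc ▸ hb₃⟩) hs⟩
        by_cases hss : s₃ = s
        · have hs₃' : (b₂, s) ∈ st.M := hss ▸ hs₃
          have heq : st.PB b₂ = st.PS s := eqm (b₂, s) hs₃'
          have h1 := hSm ⟨b₂, hs₃'⟩
          have h2 := hok.1 s₂ (edge b s₂)
          exact absurd hlt2 (not_lt.mpr (by linarith))
        · exact survB hs₃ hb hss
    · intro p hp
      rcases memMatch.mp hp with h | ⟨hp', h1, h2⟩
      · subst h
        show Function.update st.PB b b' b = Function.update st.PS s b' s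
        simp
      · show Function.update st.PB b b' p.1 = Function.update st.PS s b' p.2
        rw [Function.update_of_ne h1, Function.update_of_ne h2]; exact eqm p hp'
  | sellMatch s s' b hunm hge hval hmul hok hint hpri =>
    have hPBb : s' ≤ st.PB b := by
      rcases hint.2 with ⟨_, h⟩ | ⟨_, h⟩ <;> linarith
    have hBm : BMatched st b → s' + ε ≤ st.PB b := by
      intro hm
      rcases hint.2 with ⟨h, _⟩ | ⟨_, h⟩
      · exact absurd hm h
      · exact h
    have unmS : ∀ s₂, ¬ SMatched st s₂ → ∀ b₂, st.PB b₂ ≤ st.PS s₂ := fun s₂ hs₂ b₂ =>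
      le_of_not_gt fun hc => hs₂ (hover b₂ s₂ hc).2
    have bm : BMatched (matchPair st b s s') b := ⟨s, memMatch.mpr (Or.inl rfl)⟩
    have sm : SMatched (matchPair st b s s') s := ⟨b, memMatch.mpr (Or.inl rfl)⟩
    have survB : ∀ {b₂ s₃}, (b₂, s₃) ∈ st.M → b₂ ≠ b → s₃ ≠ s →
        BMatched (matchPair st b s s') b₂ := fun hm hb hs =>
      ⟨_, memMatch.mpr (Or.inr ⟨hm, hb, hs⟩)⟩
    have survS : ∀ {b₃ s₂}, (b₃, s₂) ∈ st.M → b₃ ≠ b → s₂ ≠ s →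
        SMatched (matchPair st b s s') s₂ := fun hm hb hs =>
      ⟨_, memMatch.mpr (Or.inr ⟨hm, hb, hs⟩)⟩
    refine ⟨?_, ?_, ?_, ?_, ?_⟩
    · intro b₂
      show MulEps ε (Function.update st.PB b s' b₂)
      rw [Function.update_apply]; split_ifs
      · exact hmul
      · exact mulB b₂
    · intro s₂
      show MulEps ε (Function.update st.PS s s' s₂)
      rw [Function.update_apply]; split_ifs
      · exact hmul
      · exact mulS s₂
    · intro b₂ s₂
      show Function.update st.PB b s' b₂ - Function.update st.PS s s' s₂ ≤ ε
      rw [Function.update_apply, Function.update_apply]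
      by_cases hb : b₂ = b <;> by_cases hs : s₂ = s
      · rw [if_pos hb, if_pos hs]; linarith
      · rw [if_pos hb, if_neg hs]; linarith [gap b s₂]
      · rw [if_neg hb, if_pos hs]; linarith [hok.1 b₂ (edge b₂ s)]
      · rw [if_neg hb, if_neg hs]; exact gap b₂ s₂
    · intro b₂ s₂ hlt'
      have hlt2 : Function.update st.PS s s' s₂ < Function.update st.PB b s' b₂ := hlt'
      rw [Function.update_apply, Function.update_apply] at hlt2
      by_cases hb : b₂ = b <;> by_cases hs : s₂ = s
      · rw [if_pos hb, if_pos hs] at hlt2; exact absurd hlt2 (lt_irrefl _)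
      · rw [if_pos hb, if_neg hs] at hlt2
        refine ⟨by rw [hb]; exact bm, ?_⟩
        by_cases hm2 : SMatched st s₂
        · obtain ⟨b₃, hb₃⟩ := hm2
          by_cases hbb : b₃ = b
          · have hb₃' : (b, s₂) ∈ st.M := hbb ▸ hb₃
            have heq : st.PB b = st.PS s₂ := eqm (b, s₂) hb₃'
            have h1 := hBm ⟨s₂, hb₃'⟩
            exact absurd hlt2 (not_lt.mpr (by linarith))
          · exact survS hb₃ hbb hs
        · exact absurd hlt2 (not_lt.mpr (le_trans hPBb (unmS s₂ hm2 b)))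
      · rw [if_neg hb, if_pos hs] at hlt2
        refine ⟨?_, by rw [hs]; exact sm⟩
        by_cases hm2 : BMatched st b₂
        · obtain ⟨s₃, hs₃⟩ := hm2
          exact survB hs₃ hb (fun hc => hunm ⟨b₂, hc ▸ hs₃⟩)
        · exact absurd hlt2 (not_lt.mpr (hok.2 b₂ (edge b₂ s) hm2))
      · rw [if_neg hb, if_neg hs] at hlt2
        obtain ⟨⟨s₃, hs₃⟩, b₃, hb₃⟩ := hover b₂ s₂ hlt2
        refine ⟨survB hs₃ hb (fun hc => hunm ⟨b₂, hc ▸ hs₃⟩), ?_⟩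
        by_cases hbb : b₃ = b
        · have hb₃' : (b, s₂) ∈ st.M := hbb ▸ hb₃
          have heq : st.PB b = st.PS s₂ := eqm (b, s₂) hb₃'
          have h1 := hBm ⟨s₂, hb₃'⟩
          have h2 := hok.1 b₂ (edge b₂ s)
          exact absurd hlt2 (not_lt.mpr (by linarith))
        · exact survS hb₃ hbb hs
    · intro p hp
      rcases memMatch.mp hp with h | ⟨hp', h1, h2⟩
      · subst h
        show Function.update st.PB b s' b = Function.update st.PS s s' s
        simp
      · show Function.update st.PB b s' p.1 = Function.update st.PS s s' p.2
        rw [Function.update_of_ne h1, Function.update_of_ne h2]; exact eqm p hp'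
private lemma inv_init {Mk : Market B S} (hE : Mk.E = Finset.univ) {ε : ℝ} (hε : 0 < ε)
    {st : MState B S} (h : ValidStart Mk ε st) : DOAInv Mk ε st := by
  obtain ⟨⟨hmat, _, _, hps⟩, hedge, _, _, hmb, hms⟩ := h
  have edge : ∀ (b : B) (s : S), (b, s) ∈ Mk.E := fun b s => by
    rw [hE]; exact Finset.mem_univ _
  refine ⟨hmb, hms, ?_, ?_, ?_⟩
  · intro b s; have := hedge (b, s) (edge b s); simp at this; linarith
  · intro b s hlt; have := hedge (b, s) (edge b s); simp at this; linarith
  · intro p hp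
    exact le_antisymm (hedge p (hmat.1 hp)) (hps p hp)

/-- no-over-price lemma: on a complete bipartite trading graph, at any
state reachable from a valid starting state, a bid strictly above an offer implies both
agents are matched. -/
theorem no_over_price_complete
    (Mk : Market B S) (hE : Mk.E = Finset.univ) (ε : ℝ) (hε : 0 < ε)
    (st₀ st : MState B S) (h₀ : ValidStart Mk ε st₀) (hr : Reachable Mk ε st₀ st) :
    ∀ (b : B) (s : S), st.PS s < st.PB b → BMatched st b ∧ SMatched st s := by
  have hinv : DOAInv Mk ε st := by
    induction hr with
    | refl => exact inv_init hE hε h₀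
    | tail _ hstep ih => exact inv_step hE hε ih hstep
  exact fun b s hlt => hinv.2.2.2.1 b s hlt
end
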